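/- arXiv:1107.1051 — 4 statements merged into one kernel-verified Lean document; each statement's English description precedes it below -/
import Mathlib

section
/- Let R be a commutative ring, let (a_1, a_2, a_3) ∈ Um_3(R) be a unimodular row, and let u ∈ R with Ra_1 + Ru = R. Then the rows (a_1, u·a_2, u·a_3) and (a_1, a_2, u²·a_3) are in the same elementary orbit, i.e., differ by right multiplication by an element of E_3(R). -/
open Matrix Polynomial

/-- Membership in the subgroup `E_n(R)` of `GL_n(R)` generated by the elementary
matrices `1 + r·e_{ij}` (`r ∈ R`, `i ≠ j`).  Since the inverse of an elementary
matrix is again elementary, this subgroup coincides with the multiplicative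
closure of the set of elementary matrices. -/
def IsElementary {ι : Type} [DecidableEq ι] [Fintype ι] {R : Type} [CommRing R]
    (M : Matrix ι ι R) : Prop :=
  M ∈ Submonoid.closure
    {A : Matrix ι ι R | ∃ (i j : ι) (r : R), i ≠ j ∧ A = 1 + Matrix.single i j r}

/-- A row `v` of length `n` is unimodular if its entries generate the unit ideal. -/
def IsUnimodular {R : Type} [CommRing R] {n : ℕ} (v : Fin n → R) : Prop :=
  ∃ w : Fin n → R, ∑ i, v i * w i = 1

/-- Block diagonal sum `M ⊥ N`. -/
def oplus {R : Type} [CommRing R] {a b : ℕ} (M : Matrix (Fin a) (Fin a) R)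
    (N : Matrix (Fin b) (Fin b) R) : Matrix (Fin (a + b)) (Fin (a + b)) R :=
  Matrix.reindex finSumFinEquiv finSumFinEquiv (Matrix.fromBlocks M 0 0 N)

/-- Reindexing a square matrix along an equality of sizes. -/
def matCast {R : Type} [CommRing R] {a b : ℕ} (h : a = b)
    (M : Matrix (Fin a) (Fin a) R) : Matrix (Fin b) (Fin b) R :=
  Matrix.reindex (finCongr h) (finCongr h) M

/-- `ψ_m` : the block diagonal sum of copies of `[[0,1],[-1,0]]` (`m` even). -/
def psi (R : Type) [CommRing R] (m : ℕ) : Matrix (Fin m) (Fin m) R :=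
  fun i j =>
    if (i : ℕ) + 1 = (j : ℕ) ∧ (i : ℕ) % 2 = 0 then 1
    else if (j : ℕ) + 1 = (i : ℕ) ∧ (j : ℕ) % 2 = 0 then -1
    else 0

/-- `σ_m` : the block diagonal sum of copies of `[[0,1],[1,0]]` (`m` even). -/
def sigmaMat (R : Type) [CommRing R] (m : ℕ) : Matrix (Fin m) (Fin m) R :=
  fun i j =>
    if ((i : ℕ) + 1 = (j : ℕ) ∧ (i : ℕ) % 2 = 0) ∨
       ((j : ℕ) + 1 = (i : ℕ) ∧ (j : ℕ) % 2 = 0) then 1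
    else 0

/-- The relation `∼` on invertible skew-symmetric matrices: for `G` of size
`2n = a` and `G'` of size `2m = b`, `G ∼ G'` iff there are `t ≥ 0` and an
elementary matrix `E ∈ E_{2(m+n+t)}(R)` with
`G ⊥ ψ_{2(m+t)} = Eᵗ (G' ⊥ ψ_{2(n+t)}) E`. -/
def WittEquiv {R : Type} [CommRing R] {a b : ℕ} (G : Matrix (Fin a) (Fin a) R)
    (G' : Matrix (Fin b) (Fin b) R) : Prop :=
  ∃ (t : ℕ) (E : Matrix (Fin (a + (b + 2 * t))) (Fin (a + (b + 2 * t))) R),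
    IsElementary E ∧
      oplus G (psi R (b + 2 * t)) =
        Eᵀ * matCast (by omega) (oplus G' (psi R (a + 2 * t))) * E

/-- The `4 × 4` invertible skew-symmetric matrix `V(v, w)` associated to a
unimodular row `v` with completion `w` (`v · wᵗ = 1`). -/
def VMat {R : Type} [CommRing R] (v w : Fin 3 → R) : Matrix (Fin 4) (Fin 4) R :=
  !![0, v 0, v 1, v 2;
     -(v 0), 0, w 2, -(w 1);
     -(v 1), -(w 2), 0, w 0;
     -(v 2), w 1, -(w 0), 0]

/-- `n`-fold orthogonal (block diagonal) sum of a matrix with itself. -/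
def oplusIter {R : Type} [CommRing R] {a : ℕ} (M : Matrix (Fin a) (Fin a) R) :
    (n : ℕ) → Matrix (Fin (n * a)) (Fin (n * a)) R
  | 0 => 0
  | n + 1 => matCast (by ring) (oplus M (oplusIter M n))

/-- The stabilization `diag(M, I_{n-d})` of a `d × d` matrix to an `n × n` matrix. -/
def stab {R : Type} [CommRing R] {d n : ℕ} (M : Matrix (Fin d) (Fin d) R) :
    Matrix (Fin n) (Fin n) R :=
  fun i j =>
    if hi : (i : ℕ) < d then
      if hj : (j : ℕ) < d then M ⟨i, hi⟩ ⟨j, hj⟩ else 0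
    else if (i : ℕ) = (j : ℕ) then 1 else 0

section Aux
variable {R : Type} [CommRing R]

private lemma vstep12 (x y z t : R) :
    ![x,y,z] ᵥ* (1 + Matrix.single (1:Fin 3) 2 t) = ![x, y, z + y*t] := by
  funext k
  fin_cases k <;>
    simp [Matrix.vecMul, dotProduct, Matrix.single, Fin.sum_univ_three,
      Matrix.one_apply, Matrix.add_apply] <;> ring

private lemma vstep02 (x y z t : R) :
    ![x,y,z] ᵥ* (1 + Matrix.single (0:Fin 3) 2 t) = ![x, y, z + x*t] := by
  funext k
  fin_cases k <;>
    simp [Matrix.vecMul, dotProduct, Matrix.single, Fin.sum_univ_three,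
      Matrix.one_apply, Matrix.add_apply] <;> ring

private lemma vstep21 (x y z t : R) :
    ![x,y,z] ᵥ* (1 + Matrix.single (2:Fin 3) 1 t) = ![x, y + z*t, z] := by
  funext k
  fin_cases k <;>
    simp [Matrix.vecMul, dotProduct, Matrix.single, Fin.sum_univ_three,
      Matrix.one_apply, Matrix.add_apply] <;> ring
end Aux

/-- If `(a₁, a₂, a₃)` is unimodular and `Ra₁ + Ru = R`, then
`(a₁, u·a₂, u·a₃)` and `(a₁, a₂, u²·a₃)` are in the same elementary orbit. -/
theorem vaserstein_square_shift
    (R : Type) [CommRing R] (a₁ a₂ a₃ u : R)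
    (hu : IsUnimodular ![a₁, a₂, a₃])
    (hcomax : ∃ r s : R, r * a₁ + s * u = 1) :
    ∃ E : Matrix (Fin 3) (Fin 3) R, IsElementary E ∧
      ![a₁, u * a₂, u * a₃] ᵥ* E = ![a₁, a₂, u ^ 2 * a₃] := by
  obtain ⟨r, s, hs⟩ := hcomax
  refine ⟨(1 + Matrix.single 1 2 s) * (1 + Matrix.single 0 2 (r*a₂)) *
      (1 + Matrix.single 2 1 (-u)) * (1 + Matrix.single 1 2 s) *
      (1 + Matrix.single 0 2 (-(r*u*a₃))) * (1 + Matrix.single 2 1 1) *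
      (1 + Matrix.single 1 2 (-1)) * (1 + Matrix.single 2 1 1), ?_, ?_⟩
  · have mem : ∀ (i j : Fin 3) (t : R), i ≠ j →
        IsElementary (1 + Matrix.single i j t) := by
      intro i j t hij
      exact Submonoid.subset_closure ⟨i, j, t, hij, rfl⟩
    exact Submonoid.mul_mem _ (Submonoid.mul_mem _ (Submonoid.mul_mem _
      (Submonoid.mul_mem _ (Submonoid.mul_mem _ (Submonoid.mul_mem _
      (Submonoid.mul_mem _ (mem _ _ _ (by decide)) (mem _ _ _ (by decide)))
      (mem _ _ _ (by decide))) (mem _ _ _ (by decide))) (mem _ _ _ (by decide)))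
      (mem _ _ _ (by decide))) (mem _ _ _ (by decide))) (mem _ _ _ (by decide))
  · have h1 : ![a₁, u*a₂, u*a₃] ᵥ* (1 + Matrix.single 1 2 s) =
        ![a₁, u*a₂, a₂ + u*a₃ - r*a₁*a₂] := by
      rw [vstep12]
      funext k; fin_cases k
      · rfl
      · rfl
      · show u*a₃ + u*a₂*s = a₂ + u*a₃ - r*a₁*a₂
        linear_combination a₂ * hs
    have h2 : ![a₁, u*a₂, a₂ + u*a₃ - r*a₁*a₂] ᵥ* (1 + Matrix.single 0 2 (r*a₂)) =
        ![a₁, u*a₂, a₂ + u*a₃] := by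
      rw [vstep02]
      funext k; fin_cases k
      · rfl
      · rfl
      · show a₂ + u*a₃ - r*a₁*a₂ + a₁*(r*a₂) = a₂ + u*a₃
        ring
    have h3 : ![a₁, u*a₂, a₂ + u*a₃] ᵥ* (1 + Matrix.single 2 1 (-u)) =
        ![a₁, -(u^2*a₃), a₂ + u*a₃] := by
      rw [vstep21]
      funext k; fin_cases k
      · rfl
      · show u*a₂ + (a₂ + u*a₃)*(-u) = -(u^2*a₃)
        ring
      · rfl
    have h4 : ![a₁, -(u^2*a₃), a₂ + u*a₃] ᵥ* (1 + Matrix.single 1 2 s) =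
        ![a₁, -(u^2*a₃), a₂ + r*a₁*(u*a₃)] := by
      rw [vstep12]
      funext k; fin_cases k
      · rfl
      · rfl
      · show a₂ + u*a₃ + -(u^2*a₃)*s = a₂ + r*a₁*(u*a₃)
        linear_combination (-(u*a₃)) * hs
    have h5 : ![a₁, -(u^2*a₃), a₂ + r*a₁*(u*a₃)] ᵥ* (1 + Matrix.single 0 2 (-(r*u*a₃))) =
        ![a₁, -(u^2*a₃), a₂] := by
      rw [vstep02]
      funext k; fin_cases k
      · rfl
      · rfl
      · show a₂ + r*a₁*(u*a₃) + a₁*(-(r*u*a₃)) = a₂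
        ring
    have h6 : ![a₁, -(u^2*a₃), a₂] ᵥ* (1 + Matrix.single 2 1 1) =
        ![a₁, a₂ - u^2*a₃, a₂] := by
      rw [vstep21]
      funext k; fin_cases k
      · rfl
      · show -(u^2*a₃) + a₂*1 = a₂ - u^2*a₃
        ring
      · rfl
    have h7 : ![a₁, a₂ - u^2*a₃, a₂] ᵥ* (1 + Matrix.single 1 2 (-1)) =
        ![a₁, a₂ - u^2*a₃, u^2*a₃] := by
      rw [vstep12]
      funext k; fin_cases k
      · rfl
      · rfl
      · show a₂ + (a₂ - u^2*a₃)*(-1) = u^2*a₃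
        ring
    have h8 : ![a₁, a₂ - u^2*a₃, u^2*a₃] ᵥ* (1 + Matrix.single 2 1 1) =
        ![a₁, a₂, u^2*a₃] := by
      rw [vstep21]
      funext k; fin_cases k
      · rfl
      · show a₂ - u^2*a₃ + u^2*a₃*1 = a₂
        ring
      · rfl
    simp only [← Matrix.vecMul_vecMul, h1, h2, h3, h4, h5, h6, h7, h8]
end

section
/- Let R be a commutative ring in which -1 is a square, and let (a_1, a_2, a_3) ∈ Um_3(R) be a unimodular row. Then (-a_1, a_2, a_3) and (a_1, a_2, a_3) are in the same elementary orbit, i.e., there exists E ∈ E_3(R) with (-a_1, a_2, a_3) = (a_1, a_2, a_3)·E. -/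
open Matrix Polynomial

section Aux

variable {R : Type} [CommRing R]

private abbrev ESet (R : Type) [CommRing R] : Set (Matrix (Fin 3) (Fin 3) R) :=
  {A : Matrix (Fin 3) (Fin 3) R | ∃ (i j : Fin 3) (r : R), i ≠ j ∧ A = 1 + Matrix.single i j r}

private lemma gen_mem (i j : Fin 3) (h : i ≠ j) (r : R) :
    (1 + Matrix.single i j r) ∈ Submonoid.closure (ESet R) :=
  Submonoid.subset_closure ⟨i, j, r, h, rfl⟩

private lemma pair_col (p q : R) :
    (1 : Matrix (Fin 3) (Fin 3) R) + vecMulVec ![p, q, 0] ![0, 0, 1] =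
      (1 + Matrix.single 0 2 p) * (1 + Matrix.single 1 2 q) := by
  ext i j
  fin_cases i <;> fin_cases j <;>
    simp [Matrix.mul_apply, Fin.sum_univ_three, Matrix.vecMulVec_apply,
      Matrix.one_apply, Matrix.single, Matrix.vecHead, Matrix.vecTail]

private lemma pair_row (s : R) (n : Fin 3 → R) (h2 : n 2 = 0) :
    (1 : Matrix (Fin 3) (Fin 3) R) + vecMulVec ![0, 0, s] n =
      (1 + Matrix.single 2 0 (s * n 0)) * (1 + Matrix.single 2 1 (s * n 1)) := by
  ext i j
  fin_cases i <;> fin_cases j <;>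
    simp only [Matrix.add_apply, Matrix.vecMulVec_apply] <;>
    simp [Matrix.mul_apply, Fin.sum_univ_three, Matrix.vecMulVec_apply,
      Matrix.one_apply, Matrix.single, Matrix.vecHead, Matrix.vecTail, h2]

private lemma vmv_facts_huw (m0 m1 n0 n1 : R) :
    vecMulVec ![m0, m1, 0] ![0, 0, (1:R)] * vecMulVec ![0, 0, (1:R)] ![n0, n1, 0] =
      vecMulVec ![m0, m1, 0] ![n0, n1, 0] := by
  ext i j
  fin_cases i <;> fin_cases j <;>
    simp [Matrix.mul_apply, Fin.sum_univ_three, Matrix.vecMulVec_apply, Matrix.vecHead,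
      Matrix.vecTail]

private lemma vmv_facts_huu' (m0 m1 : R) :
    vecMulVec ![m0, m1, 0] ![0, 0, (1:R)] * vecMulVec ![-m0, -m1, 0] ![0, 0, (1:R)] = 0 := by
  ext i j
  fin_cases i <;> fin_cases j <;>
    simp [Matrix.mul_apply, Fin.sum_univ_three, Matrix.vecMulVec_apply, Matrix.vecHead,
      Matrix.vecTail]

private lemma vmv_facts_hwu' (m0 m1 n0 n1 : R) (h0 : n0 * m0 + n1 * m1 = 0) :
    vecMulVec ![0, 0, (1:R)] ![n0, n1, 0] * vecMulVec ![-m0, -m1, 0] ![0, 0, (1:R)] = 0 := by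
  ext i j
  fin_cases i <;> fin_cases j <;>
    simp [Matrix.mul_apply, Fin.sum_univ_three, Matrix.vecMulVec_apply, Matrix.vecHead,
      Matrix.vecTail] <;>
    linear_combination -h0

private lemma vmv_facts_hAu' (m0 m1 n0 n1 : R) (h0 : n0 * m0 + n1 * m1 = 0) :
    vecMulVec ![m0, m1, 0] ![n0, n1, 0] * vecMulVec ![-m0, -m1, 0] ![0, 0, (1:R)] = 0 := by
  ext i j
  fin_cases i <;> fin_cases j <;>
    simp [Matrix.mul_apply, Fin.sum_univ_three, Matrix.vecMulVec_apply, Matrix.vecHead,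
      Matrix.vecTail] <;>
    first
      | linear_combination (-m0) * h0
      | linear_combination (-m1) * h0

private lemma vmv_facts_ring0 (p0 p1 p2 q0 q1 s0 s1 s2 t0 t1 : R)
    (hdot : q0 * s0 + q1 * s1 + 0 * s2 = 0) :
    vecMulVec ![p0, p1, p2] ![q0, q1, 0] * vecMulVec ![s0, s1, s2] ![t0, t1, 0] = 0 := by
  ext i j
  fin_cases i <;> fin_cases j <;>
    simp [Matrix.mul_apply, Fin.sum_univ_three, Matrix.vecMulVec_apply, Matrix.vecHead,
      Matrix.vecTail] <;>
    first
      | linear_combination p0 * t0 * hdot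
      | linear_combination p0 * t1 * hdot
      | linear_combination p1 * t0 * hdot
      | linear_combination p1 * t1 * hdot
      | linear_combination p2 * t0 * hdot
      | linear_combination p2 * t1 * hdot
      | linear_combination t0 * hdot
      | linear_combination t1 * hdot

private lemma vmv_add_same_right (p0 p1 q0 q1 n0 n1 : R) :
    vecMulVec ![p0, p1, 0] ![n0, n1, 0] + vecMulVec ![q0, q1, 0] ![n0, n1, 0] =
      vecMulVec ![p0 + q0, p1 + q1, 0] ![n0, n1, 0] := by
  ext i j
  fin_cases i <;> fin_cases j <;>
    simp [Matrix.vecMulVec_apply, Matrix.vecHead, Matrix.vecTail] <;> ring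

private lemma vmv_add_col (m0 m1 m2 n0 n1 : R) :
    vecMulVec ![m0, m1, 0] ![n0, n1, 0] + vecMulVec ![0, 0, m2] ![n0, n1, 0] =
      vecMulVec ![m0, m1, m2] ![n0, n1, 0] := by
  ext i j
  fin_cases i <;> fin_cases j <;>
    simp [Matrix.vecMulVec_apply, Matrix.vecHead, Matrix.vecTail]

private lemma transvection_factor (m0 m1 m2 n0 n1 : R) (h0 : n0 * m0 + n1 * m1 = 0) :
    (1 : Matrix (Fin 3) (Fin 3) R) + vecMulVec ![m0, m1, m2] ![n0, n1, 0] =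
      (((1 + vecMulVec ![m0, m1, 0] ![0, 0, (1:R)]) *
        (1 + vecMulVec ![0, 0, (1:R)] ![n0, n1, 0])) *
        (1 + vecMulVec ![-m0, -m1, 0] ![0, 0, (1:R)])) *
       ((1 + vecMulVec ![0, 0, (-1:R)] ![n0, n1, 0]) *
        (1 + vecMulVec ![0, 0, m2] ![n0, n1, 0])) := by
  have huw := vmv_facts_huw (R := R) m0 m1 n0 n1
  have huu' := vmv_facts_huu' (R := R) m0 m1
  have hwu' := vmv_facts_hwu' m0 m1 n0 n1 h0
  have hAu' := vmv_facts_hAu' m0 m1 n0 n1 h0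
  have hww' : vecMulVec ![0, 0, (1:R)] ![n0, n1, 0] *
      vecMulVec ![0, 0, (-1:R)] ![n0, n1, 0] = 0 :=
    vmv_facts_ring0 0 0 1 n0 n1 0 0 (-1) n0 n1 (by ring)
  have hAw' : vecMulVec ![m0, m1, 0] ![n0, n1, 0] *
      vecMulVec ![0, 0, (-1:R)] ![n0, n1, 0] = 0 :=
    vmv_facts_ring0 m0 m1 0 n0 n1 0 0 (-1) n0 n1 (by ring)
  have hww2 : vecMulVec ![0, 0, (1:R)] ![n0, n1, 0] *
      vecMulVec ![0, 0, m2] ![n0, n1, 0] = 0 :=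
    vmv_facts_ring0 0 0 1 n0 n1 0 0 m2 n0 n1 (by ring)
  have hAw2 : vecMulVec ![m0, m1, 0] ![n0, n1, 0] *
      vecMulVec ![0, 0, m2] ![n0, n1, 0] = 0 :=
    vmv_facts_ring0 m0 m1 0 n0 n1 0 0 m2 n0 n1 (by ring)
  have hsum1 : vecMulVec ![m0, m1, 0] ![0, 0, (1:R)] +
      vecMulVec ![-m0, -m1, 0] ![0, 0, (1:R)] = 0 := by
    ext i j
    fin_cases i <;> fin_cases j <;>
      simp [Matrix.vecMulVec_apply, Matrix.vecHead, Matrix.vecTail]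
  have hsum2 : vecMulVec ![0, 0, (1:R)] ![n0, n1, 0] +
      vecMulVec ![0, 0, (-1:R)] ![n0, n1, 0] = 0 := by
    ext i j
    fin_cases i <;> fin_cases j <;>
      simp [Matrix.vecMulVec_apply, Matrix.vecHead, Matrix.vecTail]
  have hsum3 := vmv_add_col (R := R) m0 m1 m2 n0 n1
  set u := vecMulVec ![m0, m1, 0] ![0, 0, (1:R)] with hu
  set w := vecMulVec ![0, 0, (1:R)] ![n0, n1, 0] with hwdef
  set u' := vecMulVec ![-m0, -m1, 0] ![0, 0, (1:R)] with hu'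
  set w' := vecMulVec ![0, 0, (-1:R)] ![n0, n1, 0] with hw'
  set w2 := vecMulVec ![0, 0, m2] ![n0, n1, 0] with hw2
  set A := vecMulVec ![m0, m1, 0] ![n0, n1, 0] with hA
  have c1 : (1 + u) * (1 + w) = 1 + u + w + A := by
    calc (1 + u) * (1 + w) = 1 + u + w + u * w := by noncomm_ring
      _ = 1 + u + w + A := by rw [huw]
  have c2 : (1 + u + w + A) * (1 + u') = 1 + w + A := by
    calc (1 + u + w + A) * (1 + u')
        = (1 + w + A + (u + u')) + (u * u' + w * u' + A * u') := by noncomm_ring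
      _ = 1 + w + A := by rw [huu', hwu', hAu', hsum1]; abel
  have c3 : ((1 + w + A)) * ((1 + w') * (1 + w2)) = 1 + vecMulVec ![m0, m1, m2] ![n0, n1, 0] := by
    have d1 : (1 + w') * (1 + w2) = 1 + w' + w2 + w' * w2 := by noncomm_ring
    have hw'w2 : w' * w2 = 0 :=
      vmv_facts_ring0 0 0 (-1) n0 n1 0 0 m2 n0 n1 (by ring)
    rw [d1, hw'w2, add_zero]
    calc (1 + w + A) * (1 + w' + w2)
        = (1 + (A + w2) + (w + w')) + (w * w' + w * w2 + A * w' + A * w2) := by noncomm_ring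
      _ = 1 + vecMulVec ![m0, m1, m2] ![n0, n1, 0] := by
          rw [hww', hww2, hAw', hAw2, hsum2, hsum3]; abel
  rw [c1, c2, c3]

private lemma transvection_mem (m0 m1 m2 n0 n1 : R) (h0 : n0 * m0 + n1 * m1 = 0) :
    (1 : Matrix (Fin 3) (Fin 3) R) + vecMulVec ![m0, m1, m2] ![n0, n1, 0] ∈
      Submonoid.closure (ESet R) := by
  rw [transvection_factor m0 m1 m2 n0 n1 h0]
  have hc : ∀ p q : R, (1 : Matrix (Fin 3) (Fin 3) R) + vecMulVec ![p, q, 0] ![0, 0, 1] ∈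
      Submonoid.closure (ESet R) := fun p q => by
    rw [pair_col]
    exact Submonoid.mul_mem _ (gen_mem 0 2 (by decide) _) (gen_mem 1 2 (by decide) _)
  have hr : ∀ s t0 t1 : R, (1 : Matrix (Fin 3) (Fin 3) R) + vecMulVec ![0, 0, s] ![t0, t1, 0] ∈
      Submonoid.closure (ESet R) := fun s t0 t1 => by
    rw [pair_row s ![t0, t1, 0] (by simp)]
    exact Submonoid.mul_mem _ (gen_mem 2 0 (by decide) _) (gen_mem 2 1 (by decide) _)
  exact Submonoid.mul_mem _ (Submonoid.mul_mem _ (Submonoid.mul_mem _ (hc _ _) (hr _ _ _))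
    (hc _ _)) (Submonoid.mul_mem _ (hr _ _ _) (hr _ _ _))

private lemma vecMul_transvection (v0 v1 v2 m0 m1 m2 n0 n1 : R) :
    ![v0, v1, v2] ᵥ* ((1 : Matrix (Fin 3) (Fin 3) R) + vecMulVec ![m0, m1, m2] ![n0, n1, 0]) =
      ![v0 + (v0 * m0 + v1 * m1 + v2 * m2) * n0,
        v1 + (v0 * m0 + v1 * m1 + v2 * m2) * n1,
        v2] := by
  funext j
  fin_cases j <;>
    simp [Matrix.vecMul, dotProduct, Fin.sum_univ_three, Matrix.vecMulVec_apply,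
      Matrix.add_apply, Matrix.one_apply, Matrix.vecHead, Matrix.vecTail] <;>
    ring

end Aux

set_option maxHeartbeats 4000000 in
/-- If `-1` is a square in `R` and `(a₁, a₂, a₃)` is
unimodular, then `(-a₁, a₂, a₃)` and `(a₁, a₂, a₃)` are in the same
elementary orbit. -/
theorem neg_first_coordinate_elementary
    (R : Type) [CommRing R] (a₁ a₂ a₃ : R)
    (hsq : ∃ i : R, i ^ 2 = -1)
    (hu : IsUnimodular ![a₁, a₂, a₃]) :
    ∃ E : Matrix (Fin 3) (Fin 3) R, IsElementary E ∧
      ![a₁, a₂, a₃] ᵥ* E = ![-a₁, a₂, a₃] := by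
  obtain ⟨i, hi⟩ := hsq
  obtain ⟨wv, hwv⟩ := hu
  rw [Fin.sum_univ_three] at hwv
  simp only [Matrix.cons_val_zero, Matrix.cons_val_one, Matrix.head_cons,
    Matrix.cons_val_two, Matrix.tail_cons] at hwv
  set x := wv 0 with hxd
  set y := wv 1 with hyd
  set z := wv 2 with hzd
  -- hwv : a₁ * x + a₂ * y + a₃ * z = 1
  refine ⟨(1 + vecMulVec ![(x), (y), (z)] ![(-i*y), (i*x), 0]) *
      (1 + vecMulVec ![(-a₂), (a₁), (a₃)] ![(i*a₁), (i*a₂), 0]) *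
      (1 + vecMulVec ![(x), (y), (z)] ![(y - i*y), (-x + i*x), 0]) *
      (1 + vecMulVec ![(-a₂), (a₁), (a₃)] ![(a₁), (a₂), 0]) *
      (1 + vecMulVec ![(x), (y), (z)] ![(y), (-x), 0]) *
      (1 + vecMulVec ![0, 0, (1)] ![(-2*y*z - a₃*y - 3*a₃*y*z^2 - a₃^2*y*z + 4*a₃^2*y*z^3 + 3*a₃^3*y*z^2 - a₃^3*y*z^4 - a₃^4*y*z^3 + a₁*z - 3*a₁*a₃*z^2 - 2*a₁*a₃^2*z + a₁*a₃^2*z^3 + a₁*a₃^3*z^2 + 2*i*y*z - i*a₃*y + 3*i*a₃*y*z^2 - i*a₃^2*y*z - 4*i*a₃^2*y*z^3 + 3*i*a₃^3*y*z^2 + i*a₃^3*y*z^4 - i*a₃^4*y*z^3 - i*a₁*z + 3*i*a₁*a₃*z^2 - 2*i*a₁*a₃^2*z - i*a₁*a₃^2*z^3 + i*a₁*a₃^3*z^2), 0, 0]) *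
      (1 + vecMulVec ![0, 0, (1)] ![0, (2*x*z + a₃*x + 3*a₃*x*z^2 + a₃^2*x*z - 4*a₃^2*x*z^3 - 3*a₃^3*x*z^2 + a₃^3*x*z^4 + a₃^4*x*z^3 + a₂*z - 3*a₂*a₃*z^2 - 2*a₂*a₃^2*z + a₂*a₃^2*z^3 + a₂*a₃^3*z^2 - 2*i*x*z + i*a₃*x - 3*i*a₃*x*z^2 + i*a₃^2*x*z + 4*i*a₃^2*x*z^3 - 3*i*a₃^3*x*z^2 - i*a₃^3*x*z^4 + i*a₃^4*x*z^3 - i*a₂*z + 3*i*a₂*a₃*z^2 - 2*i*a₂*a₃^2*z - i*a₂*a₃^2*z^3 + i*a₂*a₃^3*z^2), 0]) *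
      (1 + vecMulVec ![(1), 0, 0] ![0, (i), 0]) *
      (1 + vecMulVec ![0, (1), 0] ![(i), 0, 0]) *
      (1 + vecMulVec ![(1), 0, 0] ![0, (-1 + i), 0]) *
      (1 + vecMulVec ![0, (1), 0] ![(1), 0, 0]) *
      (1 + vecMulVec ![(1), 0, 0] ![0, (-1), 0]), ?_, ?_⟩
  · show _ ∈ Submonoid.closure _
    refine Submonoid.mul_mem _ (Submonoid.mul_mem _ (Submonoid.mul_mem _ (Submonoid.mul_mem _
      (Submonoid.mul_mem _ (Submonoid.mul_mem _ (Submonoid.mul_mem _ (Submonoid.mul_mem _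
      (Submonoid.mul_mem _ (Submonoid.mul_mem _ (Submonoid.mul_mem _
      (transvection_mem _ _ _ _ _ (by ring))
      (transvection_mem _ _ _ _ _ (by ring))) (transvection_mem _ _ _ _ _ (by ring)))
      (transvection_mem _ _ _ _ _ (by ring))) (transvection_mem _ _ _ _ _ (by ring)))
      (transvection_mem _ _ _ _ _ (by ring))) (transvection_mem _ _ _ _ _ (by ring)))
      (transvection_mem _ _ _ _ _ (by ring))) (transvection_mem _ _ _ _ _ (by ring)))
      (transvection_mem _ _ _ _ _ (by ring))) (transvection_mem _ _ _ _ _ (by ring)))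
      (transvection_mem _ _ _ _ _ (by ring))
  · simp only [← Matrix.vecMul_vecMul]
    have s0 : (![(a₁), (a₂), (a₃)] : Fin 3 → R) ᵥ* (1 + vecMulVec ![(x), (y), (z)] ![(-i*y), (i*x), 0]) =
        ![(a₁ - i*y), (a₂ + i*x), (a₃)] := by
      rw [vecMul_transvection]
      funext j
      fin_cases j
      · show (a₁) + ((a₁) * (x) + (a₂) * (y) + (a₃) * (z)) * (-i*y) = (a₁ - i*y)
        linear_combination ((-i*y)) * hwv + (0) * hi
      · show (a₂) + ((a₁) * (x) + (a₂) * (y) + (a₃) * (z)) * (i*x) = (a₂ + i*x)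
        linear_combination ((i*x)) * hwv + (0) * hi
      · show (a₃) = (a₃)
        linear_combination (0) * hwv + (0) * hi
    have s1 : (![(a₁ - i*y), (a₂ + i*x), (a₃)] : Fin 3 → R) ᵥ* (1 + vecMulVec ![(-a₂), (a₁), (a₃)] ![(i*a₁), (i*a₂), 0]) =
        ![(a₁*a₃*z - i*y + i*a₁*a₃^2), (a₂*a₃*z + i*x + i*a₂*a₃^2), (a₃)] := by
      rw [vecMul_transvection]
      funext j
      fin_cases j
      · show (a₁ - i*y) + ((a₁ - i*y) * (-a₂) + (a₂ + i*x) * (a₁) + (a₃) * (a₃)) * (i*a₁) = (a₁*a₃*z - i*y + i*a₁*a₃^2)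
        linear_combination ((-a₁)) * hwv + ((a₁*a₂*y + a₁^2*x)) * hi
      · show (a₂ + i*x) + ((a₁ - i*y) * (-a₂) + (a₂ + i*x) * (a₁) + (a₃) * (a₃)) * (i*a₂) = (a₂*a₃*z + i*x + i*a₂*a₃^2)
        linear_combination ((-a₂)) * hwv + ((a₂^2*y + a₁*a₂*x)) * hi
      · show (a₃) = (a₃)
        linear_combination (0) * hwv + (0) * hi
    have s2 : (![(a₁*a₃*z - i*y + i*a₁*a₃^2), (a₂*a₃*z + i*x + i*a₂*a₃^2), (a₃)] : Fin 3 → R) ᵥ* (1 + vecMulVec ![(x), (y), (z)] ![(y - i*y), (-x + i*x), 0]) =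
        ![(2*a₃*y*z + a₃^2*y - a₃^2*y*z^2 - a₃^3*y*z + a₁*a₃*z - i*y - 2*i*a₃*y*z + i*a₃^2*y + i*a₃^2*y*z^2 - i*a₃^3*y*z + i*a₁*a₃^2), (-2*a₃*x*z - a₃^2*x + a₃^2*x*z^2 + a₃^3*x*z + a₂*a₃*z + i*x + 2*i*a₃*x*z - i*a₃^2*x - i*a₃^2*x*z^2 + i*a₃^3*x*z + i*a₂*a₃^2), (a₃)] := by
      rw [vecMul_transvection]
      funext j
      fin_cases j
      · show (a₁*a₃*z - i*y + i*a₁*a₃^2) + ((a₁*a₃*z - i*y + i*a₁*a₃^2) * (x) + (a₂*a₃*z + i*x + i*a₂*a₃^2) * (y) + (a₃) * (z)) * (y - i*y) = (2*a₃*y*z + a₃^2*y - a₃^2*y*z^2 - a₃^3*y*z + a₁*a₃*z - i*y - 2*i*a₃*y*z + i*a₃^2*y + i*a₃^2*y*z^2 - i*a₃^3*y*z + i*a₁*a₃^2)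
        linear_combination ((a₃*y*z + a₃^2*y - i*a₃*y*z + i*a₃^2*y)) * hwv + ((-a₂*a₃^2*y^2 - a₁*a₃^2*x*y)) * hi
      · show (a₂*a₃*z + i*x + i*a₂*a₃^2) + ((a₁*a₃*z - i*y + i*a₁*a₃^2) * (x) + (a₂*a₃*z + i*x + i*a₂*a₃^2) * (y) + (a₃) * (z)) * (-x + i*x) = (-2*a₃*x*z - a₃^2*x + a₃^2*x*z^2 + a₃^3*x*z + a₂*a₃*z + i*x + 2*i*a₃*x*z - i*a₃^2*x - i*a₃^2*x*z^2 + i*a₃^3*x*z + i*a₂*a₃^2)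
        linear_combination ((-a₃*x*z - a₃^2*x + i*a₃*x*z - i*a₃^2*x)) * hwv + ((a₂*a₃^2*x*y + a₁*a₃^2*x^2)) * hi
      · show (a₃) = (a₃)
        linear_combination (0) * hwv + (0) * hi
    have s3 : (![(2*a₃*y*z + a₃^2*y - a₃^2*y*z^2 - a₃^3*y*z + a₁*a₃*z - i*y - 2*i*a₃*y*z + i*a₃^2*y + i*a₃^2*y*z^2 - i*a₃^3*y*z + i*a₁*a₃^2), (-2*a₃*x*z - a₃^2*x + a₃^2*x*z^2 + a₃^3*x*z + a₂*a₃*z + i*x + 2*i*a₃*x*z - i*a₃^2*x - i*a₃^2*x*z^2 + i*a₃^3*x*z + i*a₂*a₃^2), (a₃)] : Fin 3 → R) ᵥ* (1 + vecMulVec ![(-a₂), (a₁), (a₃)] ![(a₁), (a₂), 0]) =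
        ![(2*a₃*y*z + a₃^2*y - a₃^2*y*z^2 - a₃^3*y*z - a₁*a₃*z + 3*a₁*a₃^2*z^2 + 2*a₁*a₃^3*z - a₁*a₃^3*z^3 - a₁*a₃^4*z^2 - i*y - 2*i*a₃*y*z + i*a₃^2*y + i*a₃^2*y*z^2 - i*a₃^3*y*z + i*a₁ + i*a₁*a₃*z - 3*i*a₁*a₃^2*z^2 + 2*i*a₁*a₃^3*z + i*a₁*a₃^3*z^3 - i*a₁*a₃^4*z^2), (-2*a₃*x*z - a₃^2*x + a₃^2*x*z^2 + a₃^3*x*z - a₂*a₃*z + 3*a₂*a₃^2*z^2 + 2*a₂*a₃^3*z - a₂*a₃^3*z^3 - a₂*a₃^4*z^2 + i*x + 2*i*a₃*x*z - i*a₃^2*x - i*a₃^2*x*z^2 + i*a₃^3*x*z + i*a₂ + i*a₂*a₃*z - 3*i*a₂*a₃^2*z^2 + 2*i*a₂*a₃^3*z + i*a₂*a₃^3*z^3 - i*a₂*a₃^4*z^2), (a₃)] := by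
      rw [vecMul_transvection]
      funext j
      fin_cases j
      · show (2*a₃*y*z + a₃^2*y - a₃^2*y*z^2 - a₃^3*y*z + a₁*a₃*z - i*y - 2*i*a₃*y*z + i*a₃^2*y + i*a₃^2*y*z^2 - i*a₃^3*y*z + i*a₁*a₃^2) + ((2*a₃*y*z + a₃^2*y - a₃^2*y*z^2 - a₃^3*y*z + a₁*a₃*z - i*y - 2*i*a₃*y*z + i*a₃^2*y + i*a₃^2*y*z^2 - i*a₃^3*y*z + i*a₁*a₃^2) * (-a₂) + (-2*a₃*x*z - a₃^2*x + a₃^2*x*z^2 + a₃^3*x*z + a₂*a₃*z + i*x + 2*i*a₃*x*z - i*a₃^2*x - i*a₃^2*x*z^2 + i*a₃^3*x*z + i*a₂*a₃^2) * (a₁) + (a₃) * (a₃)) * (a₁) = (2*a₃*y*z + a₃^2*y - a₃^2*y*z^2 - a₃^3*y*z - a₁*a₃*z + 3*a₁*a₃^2*z^2 + 2*a₁*a₃^3*z - a₁*a₃^3*z^3 - a₁*a₃^4*z^2 - i*y - 2*i*a₃*y*z + i*a₃^2*y + i*a₃^2*y*z^2 - i*a₃^3*y*z + i*a₁ + i*a₁*a₃*z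 - 3*i*a₁*a₃^2*z^2 + 2*i*a₁*a₃^3*z + i*a₁*a₃^3*z^3 - i*a₁*a₃^4*z^2)
        linear_combination ((-2*a₁*a₃*z - a₁*a₃^2 + a₁*a₃^2*z^2 + a₁*a₃^3*z + i*a₁ + 2*i*a₁*a₃*z - i*a₁*a₃^2 - i*a₁*a₃^2*z^2 + i*a₁*a₃^3*z)) * hwv + (0) * hi
      · show (-2*a₃*x*z - a₃^2*x + a₃^2*x*z^2 + a₃^3*x*z + a₂*a₃*z + i*x + 2*i*a₃*x*z - i*a₃^2*x - i*a₃^2*x*z^2 + i*a₃^3*x*z + i*a₂*a₃^2) + ((2*a₃*y*z + a₃^2*y - a₃^2*y*z^2 - a₃^3*y*z + a₁*a₃*z - i*y - 2*i*a₃*y*z + i*a₃^2*y + i*a₃^2*y*z^2 - i*a₃^3*y*z + i*a₁*a₃^2) * (-a₂) + (-2*a₃*x*z - a₃^2*x + a₃^2*x*z^2 + a₃^3*x*z + a₂*a₃*z + i*x + 2*i*a₃*x*z - i*a₃^2*x - i*a₃^2*x*z^2 + i*a₃^3*x*z + i*a₂*a₃^2) * (a₁) + (a₃) * (a₃)) *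 (a₂) = (-2*a₃*x*z - a₃^2*x + a₃^2*x*z^2 + a₃^3*x*z - a₂*a₃*z + 3*a₂*a₃^2*z^2 + 2*a₂*a₃^3*z - a₂*a₃^3*z^3 - a₂*a₃^4*z^2 + i*x + 2*i*a₃*x*z - i*a₃^2*x - i*a₃^2*x*z^2 + i*a₃^3*x*z + i*a₂ + i*a₂*a₃*z - 3*i*a₂*a₃^2*z^2 + 2*i*a₂*a₃^3*z + i*a₂*a₃^3*z^3 - i*a₂*a₃^4*z^2)
        linear_combination ((-2*a₂*a₃*z - a₂*a₃^2 + a₂*a₃^2*z^2 + a₂*a₃^3*z + i*a₂ + 2*i*a₂*a₃*z - i*a₂*a₃^2 - i*a₂*a₃^2*z^2 + i*a₂*a₃^3*z)) * hwv + (0) * hi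
      · show (a₃) = (a₃)
        linear_combination (0) * hwv + (0) * hi
    have s4 : (![(2*a₃*y*z + a₃^2*y - a₃^2*y*z^2 - a₃^3*y*z - a₁*a₃*z + 3*a₁*a₃^2*z^2 + 2*a₁*a₃^3*z - a₁*a₃^3*z^3 - a₁*a₃^4*z^2 - i*y - 2*i*a₃*y*z + i*a₃^2*y + i*a₃^2*y*z^2 - i*a₃^3*y*z + i*a₁ + i*a₁*a₃*z - 3*i*a₁*a₃^2*z^2 + 2*i*a₁*a₃^3*z + i*a₁*a₃^3*z^3 - i*a₁*a₃^4*z^2), (-2*a₃*x*z - a₃^2*x + a₃^2*x*z^2 + a₃^3*x*z - a₂*a₃*z + 3*a₂*a₃^2*z^2 + 2*a₂*a₃^3*z - a₂*a₃^3*z^3 - a₂*a₃^4*z^2 + i*x + 2*i*a₃*x*z - i*a₃^2*x - i*a₃^2*x*z^2 + i*a₃^3*x*z + i*a₂ + i*a₂*a₃*z - 3*i*a₂*a₃^2*z^2 + 2*i*a₂*a₃^3*z + i*a₂*a₃^3*z^3 - i*a₂*a₃^4*z^2), (a₃)] : Fin 3 → R) ᵥ* (1 + vecMulVec ![(x), (y),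 (z)] ![(y), (-x), 0]) =
        ![(2*a₃*y*z + a₃^2*y + 3*a₃^2*y*z^2 + a₃^3*y*z - 4*a₃^3*y*z^3 - 3*a₃^4*y*z^2 + a₃^4*y*z^4 + a₃^5*y*z^3 - a₁*a₃*z + 3*a₁*a₃^2*z^2 + 2*a₁*a₃^3*z - a₁*a₃^3*z^3 - a₁*a₃^4*z^2 - 2*i*a₃*y*z + i*a₃^2*y - 3*i*a₃^2*y*z^2 + i*a₃^3*y*z + 4*i*a₃^3*y*z^3 - 3*i*a₃^4*y*z^2 - i*a₃^4*y*z^4 + i*a₃^5*y*z^3 + i*a₁ + i*a₁*a₃*z - 3*i*a₁*a₃^2*z^2 + 2*i*a₁*a₃^3*z + i*a₁*a₃^3*z^3 - i*a₁*a₃^4*z^2), (-2*a₃*x*z - a₃^2*x - 3*a₃^2*x*z^2 - a₃^3*x*z + 4*a₃^3*x*z^3 + 3*a₃^4*x*z^2 - a₃^4*x*z^4 - a₃^5*x*z^3 - a₂*a₃*z + 3*a₂*a₃^2*z^2 + 2*a₂*a₃^3*z - a₂*a₃^3*z^3 - a₂*a₃^4*z^2 + 2*i*a₃*x*z - i*a₃^2*x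 + 3*i*a₃^2*x*z^2 - i*a₃^3*x*z - 4*i*a₃^3*x*z^3 + 3*i*a₃^4*x*z^2 + i*a₃^4*x*z^4 - i*a₃^5*x*z^3 + i*a₂ + i*a₂*a₃*z - 3*i*a₂*a₃^2*z^2 + 2*i*a₂*a₃^3*z + i*a₂*a₃^3*z^3 - i*a₂*a₃^4*z^2), (a₃)] := by
      rw [vecMul_transvection]
      funext j
      fin_cases j
      · show (2*a₃*y*z + a₃^2*y - a₃^2*y*z^2 - a₃^3*y*z - a₁*a₃*z + 3*a₁*a₃^2*z^2 + 2*a₁*a₃^3*z - a₁*a₃^3*z^3 - a₁*a₃^4*z^2 - i*y - 2*i*a₃*y*z + i*a₃^2*y + i*a₃^2*y*z^2 - i*a₃^3*y*z + i*a₁ + i*a₁*a₃*z - 3*i*a₁*a₃^2*z^2 + 2*i*a₁*a₃^3*z + i*a₁*a₃^3*z^3 - i*a₁*a₃^4*z^2) + ((2*a₃*y*z + a₃^2*y - a₃^2*y*z^2 - a₃^3*y*z - a₁*a₃*z + 3*a₁*a₃^2*z^2 + 2*a₁*a₃^3*z - a₁*a₃^3*z^3 - a₁*a₃^4*z^2 -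 i*y - 2*i*a₃*y*z + i*a₃^2*y + i*a₃^2*y*z^2 - i*a₃^3*y*z + i*a₁ + i*a₁*a₃*z - 3*i*a₁*a₃^2*z^2 + 2*i*a₁*a₃^3*z + i*a₁*a₃^3*z^3 - i*a₁*a₃^4*z^2) * (x) + (-2*a₃*x*z - a₃^2*x + a₃^2*x*z^2 + a₃^3*x*z - a₂*a₃*z + 3*a₂*a₃^2*z^2 + 2*a₂*a₃^3*z - a₂*a₃^3*z^3 - a₂*a₃^4*z^2 + i*x + 2*i*a₃*x*z - i*a₃^2*x - i*a₃^2*x*z^2 + i*a₃^3*x*z + i*a₂ + i*a₂*a₃*z - 3*i*a₂*a₃^2*z^2 + 2*i*a₂*a₃^3*z + i*a₂*a₃^3*z^3 - i*a₂*a₃^4*z^2) * (y) + (a₃) * (z)) * (y) = (2*a₃*y*z + a₃^2*y + 3*a₃^2*y*z^2 + a₃^3*y*z - 4*a₃^3*y*z^3 - 3*a₃^4*y*z^2 + a₃^4*y*z^4 + a₃^5*y*z^3 - a₁*a₃*z + 3*a₁*a₃^2*z^2 + 2*a₁*a₃^3*z - a₁*a₃^3*z^3 - a₁*a₃^4*z^2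 - 2*i*a₃*y*z + i*a₃^2*y - 3*i*a₃^2*y*z^2 + i*a₃^3*y*z + 4*i*a₃^3*y*z^3 - 3*i*a₃^4*y*z^2 - i*a₃^4*y*z^4 + i*a₃^5*y*z^3 + i*a₁ + i*a₁*a₃*z - 3*i*a₁*a₃^2*z^2 + 2*i*a₁*a₃^3*z + i*a₁*a₃^3*z^3 - i*a₁*a₃^4*z^2)
        linear_combination ((-a₃*y*z + 3*a₃^2*y*z^2 + 2*a₃^3*y*z - a₃^3*y*z^3 - a₃^4*y*z^2 + i*y + i*a₃*y*z - 3*i*a₃^2*y*z^2 + 2*i*a₃^3*y*z + i*a₃^3*y*z^3 - i*a₃^4*y*z^2)) * hwv + (0) * hi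
      · show (-2*a₃*x*z - a₃^2*x + a₃^2*x*z^2 + a₃^3*x*z - a₂*a₃*z + 3*a₂*a₃^2*z^2 + 2*a₂*a₃^3*z - a₂*a₃^3*z^3 - a₂*a₃^4*z^2 + i*x + 2*i*a₃*x*z - i*a₃^2*x - i*a₃^2*x*z^2 + i*a₃^3*x*z + i*a₂ + i*a₂*a₃*z - 3*i*a₂*a₃^2*z^2 + 2*i*a₂*a₃^3*z + i*a₂*a₃^3*z^3 - i*a₂*a₃^4*z^2) + ((2*a₃*y*z + a₃^2*y - a₃^2*y*z^2 - a₃^3*y*z - a₁*a₃*z + 3*a₁*a₃^2*z^2 + 2*a₁*a₃^3*z - a₁*a₃^3*z^3 - a₁*a₃^4*z^2 - i*y - 2*i*a₃*y*z + i*a₃^2*y + i*a₃^2*y*z^2 - i*a₃^3*y*z + i*a₁ + i*a₁*a₃*z - 3*i*a₁*a₃^2*z^2 + 2*i*a₁*a₃^3*z + i*a₁*a₃^3*z^3 - i*a₁*a₃^4*z^2) * (x) + (-2*a₃*x*z - a₃^2*x + a₃^2*x*z^2 + a₃^3*x*z - a₂*a₃*z + 3*a₂*a₃^2*z^2 + 2*a₂*a₃^3*z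 - a₂*a₃^3*z^3 - a₂*a₃^4*z^2 + i*x + 2*i*a₃*x*z - i*a₃^2*x - i*a₃^2*x*z^2 + i*a₃^3*x*z + i*a₂ + i*a₂*a₃*z - 3*i*a₂*a₃^2*z^2 + 2*i*a₂*a₃^3*z + i*a₂*a₃^3*z^3 - i*a₂*a₃^4*z^2) * (y) + (a₃) * (z)) * (-x) = (-2*a₃*x*z - a₃^2*x - 3*a₃^2*x*z^2 - a₃^3*x*z + 4*a₃^3*x*z^3 + 3*a₃^4*x*z^2 - a₃^4*x*z^4 - a₃^5*x*z^3 - a₂*a₃*z + 3*a₂*a₃^2*z^2 + 2*a₂*a₃^3*z - a₂*a₃^3*z^3 - a₂*a₃^4*z^2 + 2*i*a₃*x*z - i*a₃^2*x + 3*i*a₃^2*x*z^2 - i*a₃^3*x*z - 4*i*a₃^3*x*z^3 + 3*i*a₃^4*x*z^2 + i*a₃^4*x*z^4 - i*a₃^5*x*z^3 + i*a₂ + i*a₂*a₃*z - 3*i*a₂*a₃^2*z^2 + 2*i*a₂*a₃^3*z + i*a₂*a₃^3*z^3 - i*a₂*a₃^4*z^2)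
        linear_combination ((a₃*x*z - 3*a₃^2*x*z^2 - 2*a₃^3*x*z + a₃^3*x*z^3 + a₃^4*x*z^2 - i*x - i*a₃*x*z + 3*i*a₃^2*x*z^2 - 2*i*a₃^3*x*z - i*a₃^3*x*z^3 + i*a₃^4*x*z^2)) * hwv + (0) * hi
      · show (a₃) = (a₃)
        linear_combination (0) * hwv + (0) * hi
    have s5 : (![(2*a₃*y*z + a₃^2*y + 3*a₃^2*y*z^2 + a₃^3*y*z - 4*a₃^3*y*z^3 - 3*a₃^4*y*z^2 + a₃^4*y*z^4 + a₃^5*y*z^3 - a₁*a₃*z + 3*a₁*a₃^2*z^2 + 2*a₁*a₃^3*z - a₁*a₃^3*z^3 - a₁*a₃^4*z^2 - 2*i*a₃*y*z + i*a₃^2*y - 3*i*a₃^2*y*z^2 + i*a₃^3*y*z + 4*i*a₃^3*y*z^3 - 3*i*a₃^4*y*z^2 - i*a₃^4*y*z^4 + i*a₃^5*y*z^3 + i*a₁ + i*a₁*a₃*z - 3*i*a₁*a₃^2*z^2 + 2*i*a₁*a₃^3*z + i*a₁*a₃^3*z^3 - i*a₁*a₃^4*z^2), (-2*a₃*x*z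 - a₃^2*x - 3*a₃^2*x*z^2 - a₃^3*x*z + 4*a₃^3*x*z^3 + 3*a₃^4*x*z^2 - a₃^4*x*z^4 - a₃^5*x*z^3 - a₂*a₃*z + 3*a₂*a₃^2*z^2 + 2*a₂*a₃^3*z - a₂*a₃^3*z^3 - a₂*a₃^4*z^2 + 2*i*a₃*x*z - i*a₃^2*x + 3*i*a₃^2*x*z^2 - i*a₃^3*x*z - 4*i*a₃^3*x*z^3 + 3*i*a₃^4*x*z^2 + i*a₃^4*x*z^4 - i*a₃^5*x*z^3 + i*a₂ + i*a₂*a₃*z - 3*i*a₂*a₃^2*z^2 + 2*i*a₂*a₃^3*z + i*a₂*a₃^3*z^3 - i*a₂*a₃^4*z^2), (a₃)] : Fin 3 → R) ᵥ* (1 + vecMulVec ![0, 0, (1)] ![(-2*y*z - a₃*y - 3*a₃*y*z^2 - a₃^2*y*z + 4*a₃^2*y*z^3 + 3*a₃^3*y*z^2 - a₃^3*y*z^4 - a₃^4*y*z^3 + a₁*z - 3*a₁*a₃*z^2 - 2*a₁*a₃^2*z + a₁*a₃^2*z^3 + a₁*a₃^3*z^2 + 2*i*y*z - i*a₃*y +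 3*i*a₃*y*z^2 - i*a₃^2*y*z - 4*i*a₃^2*y*z^3 + 3*i*a₃^3*y*z^2 + i*a₃^3*y*z^4 - i*a₃^4*y*z^3 - i*a₁*z + 3*i*a₁*a₃*z^2 - 2*i*a₁*a₃^2*z - i*a₁*a₃^2*z^3 + i*a₁*a₃^3*z^2), 0, 0]) =
        ![(i*a₁), (-2*a₃*x*z - a₃^2*x - 3*a₃^2*x*z^2 - a₃^3*x*z + 4*a₃^3*x*z^3 + 3*a₃^4*x*z^2 - a₃^4*x*z^4 - a₃^5*x*z^3 - a₂*a₃*z + 3*a₂*a₃^2*z^2 + 2*a₂*a₃^3*z - a₂*a₃^3*z^3 - a₂*a₃^4*z^2 + 2*i*a₃*x*z - i*a₃^2*x + 3*i*a₃^2*x*z^2 - i*a₃^3*x*z - 4*i*a₃^3*x*z^3 + 3*i*a₃^4*x*z^2 + i*a₃^4*x*z^4 - i*a₃^5*x*z^3 + i*a₂ + i*a₂*a₃*z - 3*i*a₂*a₃^2*z^2 + 2*i*a₂*a₃^3*z + i*a₂*a₃^3*z^3 - i*a₂*a₃^4*z^2), (a₃)] := by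
      rw [vecMul_transvection]
      funext j
      fin_cases j
      · show (2*a₃*y*z + a₃^2*y + 3*a₃^2*y*z^2 + a₃^3*y*z - 4*a₃^3*y*z^3 - 3*a₃^4*y*z^2 + a₃^4*y*z^4 + a₃^5*y*z^3 - a₁*a₃*z + 3*a₁*a₃^2*z^2 + 2*a₁*a₃^3*z - a₁*a₃^3*z^3 - a₁*a₃^4*z^2 - 2*i*a₃*y*z + i*a₃^2*y - 3*i*a₃^2*y*z^2 + i*a₃^3*y*z + 4*i*a₃^3*y*z^3 - 3*i*a₃^4*y*z^2 - i*a₃^4*y*z^4 + i*a₃^5*y*z^3 + i*a₁ + i*a₁*a₃*z - 3*i*a₁*a₃^2*z^2 + 2*i*a₁*a₃^3*z + i*a₁*a₃^3*z^3 - i*a₁*a₃^4*z^2) + ((2*a₃*y*z + a₃^2*y + 3*a₃^2*y*z^2 + a₃^3*y*z - 4*a₃^3*y*z^3 - 3*a₃^4*y*z^2 + a₃^4*y*z^4 + a₃^5*y*z^3 - a₁*a₃*z + 3*a₁*a₃^2*z^2 + 2*a₁*a₃^3*z - a₁*a₃^3*z^3 - a₁*a₃^4*z^2 - 2*i*a₃*y*z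 + i*a₃^2*y - 3*i*a₃^2*y*z^2 + i*a₃^3*y*z + 4*i*a₃^3*y*z^3 - 3*i*a₃^4*y*z^2 - i*a₃^4*y*z^4 + i*a₃^5*y*z^3 + i*a₁ + i*a₁*a₃*z - 3*i*a₁*a₃^2*z^2 + 2*i*a₁*a₃^3*z + i*a₁*a₃^3*z^3 - i*a₁*a₃^4*z^2) * 0 + (-2*a₃*x*z - a₃^2*x - 3*a₃^2*x*z^2 - a₃^3*x*z + 4*a₃^3*x*z^3 + 3*a₃^4*x*z^2 - a₃^4*x*z^4 - a₃^5*x*z^3 - a₂*a₃*z + 3*a₂*a₃^2*z^2 + 2*a₂*a₃^3*z - a₂*a₃^3*z^3 - a₂*a₃^4*z^2 + 2*i*a₃*x*z - i*a₃^2*x + 3*i*a₃^2*x*z^2 - i*a₃^3*x*z - 4*i*a₃^3*x*z^3 + 3*i*a₃^4*x*z^2 + i*a₃^4*x*z^4 - i*a₃^5*x*z^3 + i*a₂ + i*a₂*a₃*z - 3*i*a₂*a₃^2*z^2 + 2*i*a₂*a₃^3*z + i*a₂*a₃^3*z^3 - i*a₂*a₃^4*z^2) * 0 + (a₃) * (1))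 * (-2*y*z - a₃*y - 3*a₃*y*z^2 - a₃^2*y*z + 4*a₃^2*y*z^3 + 3*a₃^3*y*z^2 - a₃^3*y*z^4 - a₃^4*y*z^3 + a₁*z - 3*a₁*a₃*z^2 - 2*a₁*a₃^2*z + a₁*a₃^2*z^3 + a₁*a₃^3*z^2 + 2*i*y*z - i*a₃*y + 3*i*a₃*y*z^2 - i*a₃^2*y*z - 4*i*a₃^2*y*z^3 + 3*i*a₃^3*y*z^2 + i*a₃^3*y*z^4 - i*a₃^4*y*z^3 - i*a₁*z + 3*i*a₁*a₃*z^2 - 2*i*a₁*a₃^2*z - i*a₁*a₃^2*z^3 + i*a₁*a₃^3*z^2) = (i*a₁)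
        linear_combination (0) * hwv + (0) * hi
      · show (-2*a₃*x*z - a₃^2*x - 3*a₃^2*x*z^2 - a₃^3*x*z + 4*a₃^3*x*z^3 + 3*a₃^4*x*z^2 - a₃^4*x*z^4 - a₃^5*x*z^3 - a₂*a₃*z + 3*a₂*a₃^2*z^2 + 2*a₂*a₃^3*z - a₂*a₃^3*z^3 - a₂*a₃^4*z^2 + 2*i*a₃*x*z - i*a₃^2*x + 3*i*a₃^2*x*z^2 - i*a₃^3*x*z - 4*i*a₃^3*x*z^3 + 3*i*a₃^4*x*z^2 + i*a₃^4*x*z^4 - i*a₃^5*x*z^3 + i*a₂ + i*a₂*a₃*z - 3*i*a₂*a₃^2*z^2 + 2*i*a₂*a₃^3*z + i*a₂*a₃^3*z^3 - i*a₂*a₃^4*z^2) + ((2*a₃*y*z + a₃^2*y + 3*a₃^2*y*z^2 + a₃^3*y*z - 4*a₃^3*y*z^3 - 3*a₃^4*y*z^2 + a₃^4*y*z^4 + a₃^5*y*z^3 - a₁*a₃*z + 3*a₁*a₃^2*z^2 + 2*a₁*a₃^3*z - a₁*a₃^3*z^3 - a₁*a₃^4*z^2 - 2*i*a₃*y*z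 + i*a₃^2*y - 3*i*a₃^2*y*z^2 + i*a₃^3*y*z + 4*i*a₃^3*y*z^3 - 3*i*a₃^4*y*z^2 - i*a₃^4*y*z^4 + i*a₃^5*y*z^3 + i*a₁ + i*a₁*a₃*z - 3*i*a₁*a₃^2*z^2 + 2*i*a₁*a₃^3*z + i*a₁*a₃^3*z^3 - i*a₁*a₃^4*z^2) * 0 + (-2*a₃*x*z - a₃^2*x - 3*a₃^2*x*z^2 - a₃^3*x*z + 4*a₃^3*x*z^3 + 3*a₃^4*x*z^2 - a₃^4*x*z^4 - a₃^5*x*z^3 - a₂*a₃*z + 3*a₂*a₃^2*z^2 + 2*a₂*a₃^3*z - a₂*a₃^3*z^3 - a₂*a₃^4*z^2 + 2*i*a₃*x*z - i*a₃^2*x + 3*i*a₃^2*x*z^2 - i*a₃^3*x*z - 4*i*a₃^3*x*z^3 + 3*i*a₃^4*x*z^2 + i*a₃^4*x*z^4 - i*a₃^5*x*z^3 + i*a₂ + i*a₂*a₃*z - 3*i*a₂*a₃^2*z^2 + 2*i*a₂*a₃^3*z + i*a₂*a₃^3*z^3 - i*a₂*a₃^4*z^2) * 0 + (a₃) * (1))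 * 0 = (-2*a₃*x*z - a₃^2*x - 3*a₃^2*x*z^2 - a₃^3*x*z + 4*a₃^3*x*z^3 + 3*a₃^4*x*z^2 - a₃^4*x*z^4 - a₃^5*x*z^3 - a₂*a₃*z + 3*a₂*a₃^2*z^2 + 2*a₂*a₃^3*z - a₂*a₃^3*z^3 - a₂*a₃^4*z^2 + 2*i*a₃*x*z - i*a₃^2*x + 3*i*a₃^2*x*z^2 - i*a₃^3*x*z - 4*i*a₃^3*x*z^3 + 3*i*a₃^4*x*z^2 + i*a₃^4*x*z^4 - i*a₃^5*x*z^3 + i*a₂ + i*a₂*a₃*z - 3*i*a₂*a₃^2*z^2 + 2*i*a₂*a₃^3*z + i*a₂*a₃^3*z^3 - i*a₂*a₃^4*z^2)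
        linear_combination (0) * hwv + (0) * hi
      · show (a₃) = (a₃)
        linear_combination (0) * hwv + (0) * hi
    have s6 : (![(i*a₁), (-2*a₃*x*z - a₃^2*x - 3*a₃^2*x*z^2 - a₃^3*x*z + 4*a₃^3*x*z^3 + 3*a₃^4*x*z^2 - a₃^4*x*z^4 - a₃^5*x*z^3 - a₂*a₃*z + 3*a₂*a₃^2*z^2 + 2*a₂*a₃^3*z - a₂*a₃^3*z^3 - a₂*a₃^4*z^2 + 2*i*a₃*x*z - i*a₃^2*x + 3*i*a₃^2*x*z^2 - i*a₃^3*x*z - 4*i*a₃^3*x*z^3 + 3*i*a₃^4*x*z^2 + i*a₃^4*x*z^4 - i*a₃^5*x*z^3 + i*a₂ + i*a₂*a₃*z - 3*i*a₂*a₃^2*z^2 + 2*i*a₂*a₃^3*z + i*a₂*a₃^3*z^3 - i*a₂*a₃^4*z^2), (a₃)] : Fin 3 → R) ᵥ* (1 + vecMulVec ![0, 0, (1)] ![0, (2*x*z + a₃*x + 3*a₃*x*z^2 + a₃^2*x*z - 4*a₃^2*x*z^3 - 3*a₃^3*x*z^2 + a₃^3*x*z^4 + a₃^4*x*z^3 +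 a₂*z - 3*a₂*a₃*z^2 - 2*a₂*a₃^2*z + a₂*a₃^2*z^3 + a₂*a₃^3*z^2 - 2*i*x*z + i*a₃*x - 3*i*a₃*x*z^2 + i*a₃^2*x*z + 4*i*a₃^2*x*z^3 - 3*i*a₃^3*x*z^2 - i*a₃^3*x*z^4 + i*a₃^4*x*z^3 - i*a₂*z + 3*i*a₂*a₃*z^2 - 2*i*a₂*a₃^2*z - i*a₂*a₃^2*z^3 + i*a₂*a₃^3*z^2), 0]) =
        ![(i*a₁), (i*a₂), (a₃)] := by
      rw [vecMul_transvection]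
      funext j
      fin_cases j
      · show (i*a₁) + ((i*a₁) * 0 + (-2*a₃*x*z - a₃^2*x - 3*a₃^2*x*z^2 - a₃^3*x*z + 4*a₃^3*x*z^3 + 3*a₃^4*x*z^2 - a₃^4*x*z^4 - a₃^5*x*z^3 - a₂*a₃*z + 3*a₂*a₃^2*z^2 + 2*a₂*a₃^3*z - a₂*a₃^3*z^3 - a₂*a₃^4*z^2 + 2*i*a₃*x*z - i*a₃^2*x + 3*i*a₃^2*x*z^2 - i*a₃^3*x*z - 4*i*a₃^3*x*z^3 + 3*i*a₃^4*x*z^2 + i*a₃^4*x*z^4 - i*a₃^5*x*z^3 + i*a₂ + i*a₂*a₃*z - 3*i*a₂*a₃^2*z^2 + 2*i*a₂*a₃^3*z + i*a₂*a₃^3*z^3 - i*a₂*a₃^4*z^2) * 0 + (a₃) * (1)) * 0 = (i*a₁)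
        linear_combination (0) * hwv + (0) * hi
      · show (-2*a₃*x*z - a₃^2*x - 3*a₃^2*x*z^2 - a₃^3*x*z + 4*a₃^3*x*z^3 + 3*a₃^4*x*z^2 - a₃^4*x*z^4 - a₃^5*x*z^3 - a₂*a₃*z + 3*a₂*a₃^2*z^2 + 2*a₂*a₃^3*z - a₂*a₃^3*z^3 - a₂*a₃^4*z^2 + 2*i*a₃*x*z - i*a₃^2*x + 3*i*a₃^2*x*z^2 - i*a₃^3*x*z - 4*i*a₃^3*x*z^3 + 3*i*a₃^4*x*z^2 + i*a₃^4*x*z^4 - i*a₃^5*x*z^3 + i*a₂ + i*a₂*a₃*z - 3*i*a₂*a₃^2*z^2 + 2*i*a₂*a₃^3*z + i*a₂*a₃^3*z^3 - i*a₂*a₃^4*z^2) + ((i*a₁) * 0 + (-2*a₃*x*z - a₃^2*x - 3*a₃^2*x*z^2 - a₃^3*x*z + 4*a₃^3*x*z^3 + 3*a₃^4*x*z^2 - a₃^4*x*z^4 - a₃^5*x*z^3 - a₂*a₃*z + 3*a₂*a₃^2*z^2 + 2*a₂*a₃^3*z - a₂*a₃^3*z^3 - a₂*a₃^4*z^2 +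 2*i*a₃*x*z - i*a₃^2*x + 3*i*a₃^2*x*z^2 - i*a₃^3*x*z - 4*i*a₃^3*x*z^3 + 3*i*a₃^4*x*z^2 + i*a₃^4*x*z^4 - i*a₃^5*x*z^3 + i*a₂ + i*a₂*a₃*z - 3*i*a₂*a₃^2*z^2 + 2*i*a₂*a₃^3*z + i*a₂*a₃^3*z^3 - i*a₂*a₃^4*z^2) * 0 + (a₃) * (1)) * (2*x*z + a₃*x + 3*a₃*x*z^2 + a₃^2*x*z - 4*a₃^2*x*z^3 - 3*a₃^3*x*z^2 + a₃^3*x*z^4 + a₃^4*x*z^3 + a₂*z - 3*a₂*a₃*z^2 - 2*a₂*a₃^2*z + a₂*a₃^2*z^3 + a₂*a₃^3*z^2 - 2*i*x*z + i*a₃*x - 3*i*a₃*x*z^2 + i*a₃^2*x*z + 4*i*a₃^2*x*z^3 - 3*i*a₃^3*x*z^2 - i*a₃^3*x*z^4 + i*a₃^4*x*z^3 - i*a₂*z + 3*i*a₂*a₃*z^2 - 2*i*a₂*a₃^2*z - i*a₂*a₃^2*z^3 + i*a₂*a₃^3*z^2) = (i*a₂)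
        linear_combination (0) * hwv + (0) * hi
      · show (a₃) = (a₃)
        linear_combination (0) * hwv + (0) * hi
    have s7 : (![(i*a₁), (i*a₂), (a₃)] : Fin 3 → R) ᵥ* (1 + vecMulVec ![(1), 0, 0] ![0, (i), 0]) =
        ![(i*a₁), (-a₁ + i*a₂), (a₃)] := by
      rw [vecMul_transvection]
      funext j
      fin_cases j
      · show (i*a₁) + ((i*a₁) * (1) + (i*a₂) * 0 + (a₃) * 0) * 0 = (i*a₁)
        linear_combination (0) * hwv + (0) * hi
      · show (i*a₂) + ((i*a₁) * (1) + (i*a₂) * 0 + (a₃) * 0) * (i) = (-a₁ + i*a₂)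
        linear_combination (0) * hwv + ((a₁)) * hi
      · show (a₃) = (a₃)
        linear_combination (0) * hwv + (0) * hi
    have s8 : (![(i*a₁), (-a₁ + i*a₂), (a₃)] : Fin 3 → R) ᵥ* (1 + vecMulVec ![0, (1), 0] ![(i), 0, 0]) =
        ![(-a₂), (-a₁ + i*a₂), (a₃)] := by
      rw [vecMul_transvection]
      funext j
      fin_cases j
      · show (i*a₁) + ((i*a₁) * 0 + (-a₁ + i*a₂) * (1) + (a₃) * 0) * (i) = (-a₂)
        linear_combination (0) * hwv + ((a₂)) * hi
      · show (-a₁ + i*a₂) + ((i*a₁) * 0 + (-a₁ + i*a₂) * (1) + (a₃) * 0) * 0 = (-a₁ + i*a₂)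
        linear_combination (0) * hwv + (0) * hi
      · show (a₃) = (a₃)
        linear_combination (0) * hwv + (0) * hi
    have s9 : (![(-a₂), (-a₁ + i*a₂), (a₃)] : Fin 3 → R) ᵥ* (1 + vecMulVec ![(1), 0, 0] ![0, (-1 + i), 0]) =
        ![(-a₂), (a₂ - a₁), (a₃)] := by
      rw [vecMul_transvection]
      funext j
      fin_cases j
      · show (-a₂) + ((-a₂) * (1) + (-a₁ + i*a₂) * 0 + (a₃) * 0) * 0 = (-a₂)
        linear_combination (0) * hwv + (0) * hi
      · show (-a₁ + i*a₂) + ((-a₂) * (1) + (-a₁ + i*a₂) * 0 + (a₃) * 0) * (-1 + i) = (a₂ - a₁)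
        linear_combination (0) * hwv + (0) * hi
      · show (a₃) = (a₃)
        linear_combination (0) * hwv + (0) * hi
    have s10 : (![(-a₂), (a₂ - a₁), (a₃)] : Fin 3 → R) ᵥ* (1 + vecMulVec ![0, (1), 0] ![(1), 0, 0]) =
        ![(-a₁), (a₂ - a₁), (a₃)] := by
      rw [vecMul_transvection]
      funext j
      fin_cases j
      · show (-a₂) + ((-a₂) * 0 + (a₂ - a₁) * (1) + (a₃) * 0) * (1) = (-a₁)
        linear_combination (0) * hwv + (0) * hi
      · show (a₂ - a₁) + ((-a₂) * 0 + (a₂ - a₁) * (1) + (a₃) * 0) * 0 = (a₂ - a₁)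
        linear_combination (0) * hwv + (0) * hi
      · show (a₃) = (a₃)
        linear_combination (0) * hwv + (0) * hi
    have s11 : (![(-a₁), (a₂ - a₁), (a₃)] : Fin 3 → R) ᵥ* (1 + vecMulVec ![(1), 0, 0] ![0, (-1), 0]) =
        ![(-a₁), (a₂), (a₃)] := by
      rw [vecMul_transvection]
      funext j
      fin_cases j
      · show (-a₁) + ((-a₁) * (1) + (a₂ - a₁) * 0 + (a₃) * 0) * 0 = (-a₁)
        linear_combination (0) * hwv + (0) * hi
      · show (a₂ - a₁) + ((-a₁) * (1) + (a₂ - a₁) * 0 + (a₃) * 0) * (-1) = (a₂)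
        linear_combination (0) * hwv + (0) * hi
      · show (a₃) = (a₃)
        linear_combination (0) * hwv + (0) * hi
    rw [s0, s1, s2, s3, s4, s5, s6, s7, s8, s9, s10, s11]
end

section
/- Let R be a commutative ring with 2 invertible, let f_0, f_1 ∈ GL_{2n}(R) be invertible skew-symmetric matrices, and let g, h ∈ GL_{2n}(R). Then (gᵗf_1g) ⊥ σ_{2n}(gᵗf_0g)^{-1}σ_{2n} ∼ (hᵗf_1h) ⊥ σ_{2n}(hᵗf_0h)^{-1}σ_{2n}; in other words, the class of (gᵗf_1g) ⊥ σ_{2n}(gᵗf_0g)^{-1}σ_{2n} under the relation ∼ does not depend on the choice of g. -/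
open Matrix Polynomial

set_option linter.unusedSectionVars false
set_option maxHeartbeats 1000000

section Aux

variable {R : Type} [CommRing R] {ι κ : Type} [DecidableEq ι] [Fintype ι] [DecidableEq κ] [Fintype κ]

lemma reindex_mul (e : ι ≃ κ) (M N : Matrix ι ι R) :
    reindex e e M * reindex e e N = reindex e e (M * N) := by
  simp only [reindex_apply]
  exact Matrix.submatrix_mul_equiv M N _ e.symm _

lemma reindex_one (e : ι ≃ κ) : reindex e e (1 : Matrix ι ι R) = 1 := by
  simp [reindex_apply]

lemma reindex_stdBasisMatrix (e : ι ≃ κ) (i j : ι) (r : R) :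
    reindex e e (Matrix.single i j r) = Matrix.single (e i) (e j) r := by
  ext a b
  simp only [reindex_apply, submatrix_apply, Matrix.single]
  simp only [Matrix.of_apply]
  by_cases h1 : i = e.symm a <;> by_cases h2 : j = e.symm b <;>
    simp [h1, h2, Equiv.eq_symm_apply, e.apply_symm_apply] <;> aesop

lemma IsElementary.one : IsElementary (1 : Matrix ι ι R) := Submonoid.one_mem _

lemma IsElementary.mul {M N : Matrix ι ι R} (hM : IsElementary M) (hN : IsElementary N) :
    IsElementary (M * N) := Submonoid.mul_mem _ hM hN

lemma IsElementary.reindex {M : Matrix ι ι R} (e : ι ≃ κ) (hM : IsElementary M) :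
    IsElementary (Matrix.reindex e e M) := by
  induction hM using Submonoid.closure_induction with
  | mem x hx =>
    obtain ⟨i, j, r, hij, rfl⟩ := hx
    apply Submonoid.subset_closure
    refine ⟨e i, e j, r, by simp [hij], ?_⟩
    have : Matrix.reindex e e ((1:Matrix ι ι R) + Matrix.single i j r) = Matrix.reindex e e 1 + Matrix.reindex e e (Matrix.single i j r) := by
      simp [reindex_apply, Matrix.submatrix_add]
    rw [this, reindex_one, reindex_stdBasisMatrix]
  | one => rw [reindex_one]; exact Submonoid.one_mem _
  | mul x y _ _ hx hy => rw [← reindex_mul]; exact Submonoid.mul_mem _ hx hy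

variable {a b : ℕ}

lemma oplus_mul (M M' : Matrix (Fin a) (Fin a) R) (N N' : Matrix (Fin b) (Fin b) R) :
    oplus M N * oplus M' N' = oplus (M * M') (N * N') := by
  unfold oplus
  rw [reindex_mul, fromBlocks_multiply]
  simp

lemma oplus_transpose (M : Matrix (Fin a) (Fin a) R) (N : Matrix (Fin b) (Fin b) R) :
    (oplus M N)ᵀ = oplus Mᵀ Nᵀ := by
  unfold oplus
  simp [reindex_apply, transpose_submatrix, fromBlocks_transpose]

lemma oplus_one : oplus (1 : Matrix (Fin a) (Fin a) R) (1 : Matrix (Fin b) (Fin b) R) = 1 := by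
  unfold oplus
  rw [fromBlocks_one, reindex_one]

lemma oplus_elem_left {M : Matrix (Fin a) (Fin a) R} (hM : IsElementary M) :
    IsElementary (oplus M (1 : Matrix (Fin b) (Fin b) R)) := by
  induction hM using Submonoid.closure_induction with
  | mem x hx =>
    obtain ⟨i, j, r, hij, rfl⟩ := hx
    apply Submonoid.subset_closure
    refine ⟨finSumFinEquiv (Sum.inl i), finSumFinEquiv (Sum.inl j), r, finSumFinEquiv.injective.ne (Sum.inl_injective.ne hij), ?_⟩
    unfold oplus
    have : Matrix.fromBlocks ((1:Matrix (Fin a) (Fin a) R) + Matrix.single i j r) 0 0 (1:Matrix (Fin b) (Fin b) R)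
        = fromBlocks (1:Matrix (Fin a) (Fin a) R) (0:Matrix (Fin a) (Fin b) R)
            (0:Matrix (Fin b) (Fin a) R) (1:Matrix (Fin b) (Fin b) R)
          + fromBlocks (Matrix.single i j r) (0:Matrix (Fin a) (Fin b) R) (0:Matrix (Fin b) (Fin a) R) (0:Matrix (Fin b) (Fin b) R) := by
      rw [fromBlocks_add]; simp
    rw [this, fromBlocks_one]
    have h2 : Matrix.reindex (finSumFinEquiv (m := a) (n := b)) finSumFinEquiv
        ((1 : Matrix _ _ R) + fromBlocks (Matrix.single i j r) (0:Matrix (Fin a) (Fin b) R) (0:Matrix (Fin b) (Fin a) R) (0:Matrix (Fin b) (Fin b) R))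
        = Matrix.reindex finSumFinEquiv finSumFinEquiv (1 : Matrix _ _ R)
          + Matrix.reindex finSumFinEquiv finSumFinEquiv (fromBlocks (Matrix.single i j r) (0:Matrix (Fin a) (Fin b) R) (0:Matrix (Fin b) (Fin a) R) (0:Matrix (Fin b) (Fin b) R)) := by
      simp [reindex_apply, Matrix.submatrix_add]
    rw [h2, reindex_one]
    congr 1
    have : Matrix.fromBlocks (Matrix.single i j r) 0 0 (0 : Matrix (Fin b) (Fin b) R)
        = Matrix.single (Sum.inl i) (Sum.inl j) r := by
      ext (x|x) (y|y) <;> simp [Matrix.single, fromBlocks] <;> aesop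
    rw [this, reindex_stdBasisMatrix]
  | one => rw [oplus_one]; exact Submonoid.one_mem _
  | mul x y _ _ hx hy =>
    have : oplus (x * y) (1 : Matrix (Fin b) (Fin b) R) = oplus x 1 * oplus y 1 := by
      rw [oplus_mul, mul_one]
    rw [this]; exact Submonoid.mul_mem _ hx hy

lemma oplus_elem_right {N : Matrix (Fin b) (Fin b) R} (hN : IsElementary N) :
    IsElementary (oplus (1 : Matrix (Fin a) (Fin a) R) N) := by
  induction hN using Submonoid.closure_induction with
  | mem x hx =>
    obtain ⟨i, j, r, hij, rfl⟩ := hx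
    apply Submonoid.subset_closure
    refine ⟨finSumFinEquiv (Sum.inr i), finSumFinEquiv (Sum.inr j), r, finSumFinEquiv.injective.ne (Sum.inr_injective.ne hij), ?_⟩
    unfold oplus
    have : Matrix.fromBlocks (1:Matrix (Fin a) (Fin a) R) 0 0 ((1:Matrix (Fin b) (Fin b) R) + Matrix.single i j r)
        = fromBlocks (1:Matrix (Fin a) (Fin a) R) (0:Matrix (Fin a) (Fin b) R)
            (0:Matrix (Fin b) (Fin a) R) (1:Matrix (Fin b) (Fin b) R)
          + fromBlocks (0:Matrix (Fin a) (Fin a) R) (0:Matrix (Fin a) (Fin b) R) (0:Matrix (Fin b) (Fin a) R) (Matrix.single i j r) := by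
      rw [fromBlocks_add]; simp
    rw [this, fromBlocks_one]
    have h2 : Matrix.reindex (finSumFinEquiv (m := a) (n := b)) finSumFinEquiv
        ((1 : Matrix _ _ R) + fromBlocks (0:Matrix (Fin a) (Fin a) R) (0:Matrix (Fin a) (Fin b) R) (0:Matrix (Fin b) (Fin a) R) (Matrix.single i j r))
        = Matrix.reindex finSumFinEquiv finSumFinEquiv (1 : Matrix _ _ R)
          + Matrix.reindex finSumFinEquiv finSumFinEquiv (fromBlocks (0:Matrix (Fin a) (Fin a) R) (0:Matrix (Fin a) (Fin b) R) (0:Matrix (Fin b) (Fin a) R) (Matrix.single i j r)) := by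
      simp [reindex_apply, Matrix.submatrix_add]
    rw [h2, reindex_one]
    congr 1
    have : Matrix.fromBlocks (0 : Matrix (Fin a) (Fin a) R) 0 0 (Matrix.single i j r)
        = Matrix.single (Sum.inr i) (Sum.inr j) r := by
      ext (x|x) (y|y) <;> simp [Matrix.single, fromBlocks] <;> aesop
    rw [this, reindex_stdBasisMatrix]
  | one => rw [oplus_one]; exact Submonoid.one_mem _
  | mul x y _ _ hx hy =>
    have : oplus (1 : Matrix (Fin a) (Fin a) R) (x * y) = oplus 1 x * oplus 1 y := by
      rw [oplus_mul, mul_one]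
    rw [this]; exact Submonoid.mul_mem _ hx hy

lemma oplus_elem {M : Matrix (Fin a) (Fin a) R} {N : Matrix (Fin b) (Fin b) R}
    (hM : IsElementary M) (hN : IsElementary N) : IsElementary (oplus M N) := by
  have : oplus M N = oplus M 1 * oplus 1 N := by rw [oplus_mul, mul_one, one_mul]
  rw [this]
  exact (oplus_elem_left hM).mul (oplus_elem_right hN)

-- upper block triangular matrices are elementary
def UB {R : Type} [CommRing R] {a b : ℕ} (A : Matrix (Fin a) (Fin b) R) :
    Matrix (Fin (a + b)) (Fin (a + b)) R :=
  Matrix.reindex finSumFinEquiv finSumFinEquiv (Matrix.fromBlocks 1 A 0 1)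

def LB {R : Type} [CommRing R] {a b : ℕ} (A : Matrix (Fin b) (Fin a) R) :
    Matrix (Fin (a + b)) (Fin (a + b)) R :=
  Matrix.reindex finSumFinEquiv finSumFinEquiv (Matrix.fromBlocks 1 0 A 1)

lemma UB_add (A B : Matrix (Fin a) (Fin b) R) : UB A * UB B = UB (A + B) := by
  unfold UB
  rw [reindex_mul, fromBlocks_multiply]
  congr 1 <;> simp [add_comm]

lemma LB_add (A B : Matrix (Fin b) (Fin a) R) : LB A * LB B = LB (A + B) := by
  unfold LB
  rw [reindex_mul, fromBlocks_multiply]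
  congr 1 <;> simp [add_comm]

lemma UB_elem (A : Matrix (Fin a) (Fin b) R) : IsElementary (UB A) := by
  have key : ∀ s : Finset (Fin a × Fin b), IsElementary (UB (∑ p ∈ s, Matrix.single p.1 p.2 (A p.1 p.2))) := by
    intro s
    induction s using Finset.induction with
    | empty =>
      have : UB (∑ p ∈ (∅ : Finset (Fin a × Fin b)), Matrix.single p.1 p.2 (A p.1 p.2)) = 1 := by
        simp [UB, fromBlocks_one, reindex_one]
      rw [this]; exact Submonoid.one_mem _
    | @insert p s' hp ih =>
      rw [Finset.sum_insert hp, ← UB_add]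
      refine Submonoid.mul_mem _ ?_ ih
      apply Submonoid.subset_closure
      refine ⟨finSumFinEquiv (Sum.inl p.1), finSumFinEquiv (Sum.inr p.2), A p.1 p.2,
        finSumFinEquiv.injective.ne (by simp), ?_⟩
      unfold UB
      have h1 : Matrix.fromBlocks (1:Matrix (Fin a) (Fin a) R) (Matrix.single p.1 p.2 (A p.1 p.2))
          (0:Matrix (Fin b) (Fin a) R) (1:Matrix (Fin b) (Fin b) R)
          = fromBlocks (1:Matrix (Fin a) (Fin a) R) (0:Matrix (Fin a) (Fin b) R)
            (0:Matrix (Fin b) (Fin a) R) (1:Matrix (Fin b) (Fin b) R)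
          + fromBlocks (0:Matrix (Fin a) (Fin a) R) (Matrix.single p.1 p.2 (A p.1 p.2)) (0:Matrix (Fin b) (Fin a) R) (0:Matrix (Fin b) (Fin b) R) := by
        rw [fromBlocks_add]; simp
      rw [h1, fromBlocks_one]
      have h2 : Matrix.reindex (finSumFinEquiv (m := a) (n := b)) finSumFinEquiv
          ((1 : Matrix _ _ R) + fromBlocks (0:Matrix (Fin a) (Fin a) R) (Matrix.single p.1 p.2 (A p.1 p.2)) (0:Matrix (Fin b) (Fin a) R) (0:Matrix (Fin b) (Fin b) R))
          = Matrix.reindex finSumFinEquiv finSumFinEquiv (1 : Matrix _ _ R)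
            + Matrix.reindex finSumFinEquiv finSumFinEquiv (fromBlocks (0:Matrix (Fin a) (Fin a) R) (Matrix.single p.1 p.2 (A p.1 p.2)) (0:Matrix (Fin b) (Fin a) R) (0:Matrix (Fin b) (Fin b) R)) := by
        simp [reindex_apply, Matrix.submatrix_add]
      rw [h2, reindex_one]
      congr 1
      have h3 : Matrix.fromBlocks (0:Matrix (Fin a) (Fin a) R) (Matrix.single p.1 p.2 (A p.1 p.2))
          (0:Matrix (Fin b) (Fin a) R) (0:Matrix (Fin b) (Fin b) R)
          = Matrix.single (Sum.inl p.1) (Sum.inr p.2) (A p.1 p.2) := by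
        ext (x|x) (y|y) <;> simp [Matrix.single, fromBlocks]
      rw [h3, reindex_stdBasisMatrix]
  have hA : A = ∑ p ∈ (Finset.univ : Finset (Fin a × Fin b)), Matrix.single p.1 p.2 (A p.1 p.2) := by
    rw [Fintype.sum_prod_type]
    exact matrix_eq_sum_single A
  rw [hA]
  exact key Finset.univ

lemma LB_elem (A : Matrix (Fin b) (Fin a) R) : IsElementary (LB A) := by
  have key : ∀ s : Finset (Fin b × Fin a), IsElementary (LB (∑ p ∈ s, Matrix.single p.1 p.2 (A p.1 p.2))) := by
    intro s
    induction s using Finset.induction with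
    | empty =>
      have : LB (∑ p ∈ (∅ : Finset (Fin b × Fin a)), Matrix.single p.1 p.2 (A p.1 p.2)) = 1 := by
        simp [LB, fromBlocks_one, reindex_one]
      rw [this]; exact Submonoid.one_mem _
    | @insert p s' hp ih =>
      rw [Finset.sum_insert hp, ← LB_add]
      refine Submonoid.mul_mem _ ?_ ih
      apply Submonoid.subset_closure
      refine ⟨finSumFinEquiv (Sum.inr p.1), finSumFinEquiv (Sum.inl p.2), A p.1 p.2,
        finSumFinEquiv.injective.ne (by simp), ?_⟩
      unfold LB
      have h1 : Matrix.fromBlocks (1:Matrix (Fin a) (Fin a) R) (0:Matrix (Fin a) (Fin b) R)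
          (Matrix.single p.1 p.2 (A p.1 p.2)) (1:Matrix (Fin b) (Fin b) R)
          = fromBlocks (1:Matrix (Fin a) (Fin a) R) (0:Matrix (Fin a) (Fin b) R)
            (0:Matrix (Fin b) (Fin a) R) (1:Matrix (Fin b) (Fin b) R)
          + fromBlocks (0:Matrix (Fin a) (Fin a) R) (0:Matrix (Fin a) (Fin b) R)
            (Matrix.single p.1 p.2 (A p.1 p.2)) (0:Matrix (Fin b) (Fin b) R) := by
        rw [fromBlocks_add]; simp
      rw [h1, fromBlocks_one]
      have h2 : Matrix.reindex (finSumFinEquiv (m := a) (n := b)) finSumFinEquiv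
          ((1 : Matrix _ _ R) + fromBlocks (0:Matrix (Fin a) (Fin a) R) (0:Matrix (Fin a) (Fin b) R)
            (Matrix.single p.1 p.2 (A p.1 p.2)) (0:Matrix (Fin b) (Fin b) R))
          = Matrix.reindex finSumFinEquiv finSumFinEquiv (1 : Matrix _ _ R)
            + Matrix.reindex finSumFinEquiv finSumFinEquiv (fromBlocks (0:Matrix (Fin a) (Fin a) R)
              (0:Matrix (Fin a) (Fin b) R) (Matrix.single p.1 p.2 (A p.1 p.2)) (0:Matrix (Fin b) (Fin b) R)) := by
        simp [reindex_apply, Matrix.submatrix_add]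
      rw [h2, reindex_one]
      congr 1
      have h3 : Matrix.fromBlocks (0:Matrix (Fin a) (Fin a) R) (0:Matrix (Fin a) (Fin b) R)
          (Matrix.single p.1 p.2 (A p.1 p.2)) (0:Matrix (Fin b) (Fin b) R)
          = Matrix.single (Sum.inr p.1) (Sum.inl p.2) (A p.1 p.2) := by
        ext (x|x) (y|y) <;> simp [Matrix.single, fromBlocks]
      rw [h3, reindex_stdBasisMatrix]
  have hA : A = ∑ p ∈ (Finset.univ : Finset (Fin b × Fin a)), Matrix.single p.1 p.2 (A p.1 p.2) := by
    rw [Fintype.sum_prod_type]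
    exact matrix_eq_sum_single A
  rw [hA]
  exact key Finset.univ

/-- Whitehead lemma: `X ⊕ Y` is elementary when `XY = YX = 1`. -/
lemma whitehead {X Y : Matrix (Fin a) (Fin a) R} (hXY : X * Y = 1) (hYX : Y * X = 1) :
    IsElementary (oplus X Y) := by
  have key : oplus X Y = UB X * LB (-Y) * UB X * UB (-1) * LB 1 * UB (-1) := by
    unfold oplus UB LB
    rw [reindex_mul, reindex_mul, reindex_mul, reindex_mul, reindex_mul]
    congr 1
    simp only [fromBlocks_multiply]
    simp only [Matrix.mul_one, Matrix.one_mul, Matrix.zero_mul, Matrix.mul_zero,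
      add_zero, zero_add, Matrix.neg_mul, Matrix.mul_neg, neg_neg, hXY, hYX]
    congr 1 <;>
      simp [Matrix.mul_assoc, hXY, hYX]
  rw [key]
  exact (((((UB_elem X).mul (LB_elem (-Y))).mul (UB_elem X)).mul (UB_elem (-1))).mul
    (LB_elem 1)).mul (UB_elem (-1))

lemma fromBlocks_reindex {α β γ δ : Type} (u : α ≃ γ) (v : β ≃ δ)
    (M : Matrix α α R) (N : Matrix β β R) :
    Matrix.fromBlocks (Matrix.reindex u u M) 0 0 (Matrix.reindex v v N)
      = Matrix.reindex (u.sumCongr v) (u.sumCongr v) (Matrix.fromBlocks M 0 0 N) := by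
  ext (x|x) (y|y) <;> simp [fromBlocks, reindex_apply, Equiv.sumCongr_symm, Equiv.sumCongr_apply]

lemma oplus_reindex {c d : ℕ} (u : Fin a ≃ Fin c) (v : Fin b ≃ Fin d)
    (M : Matrix (Fin a) (Fin a) R) (N : Matrix (Fin b) (Fin b) R) :
    oplus (Matrix.reindex u u M) (Matrix.reindex v v N)
      = Matrix.reindex (finSumFinEquiv.symm.trans ((u.sumCongr v).trans finSumFinEquiv))
          (finSumFinEquiv.symm.trans ((u.sumCongr v).trans finSumFinEquiv))
          (oplus M N) := by
  unfold oplus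
  rw [fromBlocks_reindex]
  ext i j
  simp [reindex_apply]

def quadEquiv (a b c d : ℕ) : ((Fin a ⊕ Fin b) ⊕ (Fin c ⊕ Fin d)) ≃ Fin ((a+b)+(c+d)) :=
  (finSumFinEquiv.sumCongr finSumFinEquiv).trans finSumFinEquiv

lemma oplus_oplus_eq {c d : ℕ} (P : Matrix (Fin a) (Fin a) R) (Q : Matrix (Fin b) (Fin b) R)
    (S : Matrix (Fin c) (Fin c) R) (T : Matrix (Fin d) (Fin d) R) :
    oplus (oplus P Q) (oplus S T)
      = Matrix.reindex (quadEquiv a b c d) (quadEquiv a b c d)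
          (Matrix.fromBlocks (Matrix.fromBlocks P 0 0 Q) 0 0 (Matrix.fromBlocks S 0 0 T)) := by
  unfold oplus quadEquiv
  rw [fromBlocks_reindex]
  ext i j
  simp [reindex_apply]

lemma fourswap {c d : ℕ} (P : Matrix (Fin a) (Fin a) R) (Q : Matrix (Fin b) (Fin b) R)
    (S : Matrix (Fin c) (Fin c) R) (T : Matrix (Fin d) (Fin d) R) :
    Matrix.fromBlocks (Matrix.fromBlocks P 0 0 Q) 0 0 (Matrix.fromBlocks S 0 0 T)
      = Matrix.reindex (Equiv.sumSumSumComm (Fin a) (Fin c) (Fin b) (Fin d))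
          (Equiv.sumSumSumComm (Fin a) (Fin c) (Fin b) (Fin d))
          (Matrix.fromBlocks (Matrix.fromBlocks P 0 0 S) 0 0 (Matrix.fromBlocks Q 0 0 T)) := by
  ext ((x|x)|(x|x)) ((y|y)|(y|y)) <;>
    simp [fromBlocks, reindex_apply, Equiv.sumSumSumComm]

/-- The middle-block swap. -/
lemma oplus_swap {c d : ℕ} (P : Matrix (Fin a) (Fin a) R) (Q : Matrix (Fin b) (Fin b) R)
    (S : Matrix (Fin c) (Fin c) R) (T : Matrix (Fin d) (Fin d) R) :
    oplus (oplus P Q) (oplus S T)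
      = Matrix.reindex
          ((quadEquiv a c b d).symm.trans
            ((Equiv.sumSumSumComm (Fin a) (Fin c) (Fin b) (Fin d)).trans (quadEquiv a b c d)))
          ((quadEquiv a c b d).symm.trans
            ((Equiv.sumSumSumComm (Fin a) (Fin c) (Fin b) (Fin d)).trans (quadEquiv a b c d)))
          (oplus (oplus P S) (oplus Q T)) := by
  rw [oplus_oplus_eq P Q S T, fourswap, oplus_oplus_eq P S Q T]
  ext i j
  simp [reindex_apply]

/-- The interleaving equivalence `Fin (N + N) ≃ Fin (N + N)`. -/
def chi (N : ℕ) : Fin (N + N) ≃ Fin (N + N) where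
  toFun k := ⟨if (k : ℕ) < N then 2 * k else 2 * ((k : ℕ) - N) + 1, by split_ifs <;> omega⟩
  invFun j := ⟨if (j : ℕ) % 2 = 0 then (j : ℕ) / 2 else N + (j : ℕ) / 2, by split_ifs <;> omega⟩
  left_inv k := by
    apply Fin.ext
    simp only [Fin.val_mk]
    split_ifs <;> omega
  right_inv j := by
    apply Fin.ext
    simp only [Fin.val_mk]
    split_ifs <;> omega

lemma psi_reindex (N : ℕ) :
    psi R (N + N) = Matrix.reindex (finSumFinEquiv.trans (chi N)) (finSumFinEquiv.trans (chi N))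
      (Matrix.fromBlocks (0 : Matrix (Fin N) (Fin N) R) 1 (-1) 0) := by
  ext i j
  set e := finSumFinEquiv.trans (chi N) with he
  obtain ⟨u, rfl⟩ : ∃ u, i = e u := ⟨e.symm i, (e.apply_symm_apply i).symm⟩
  obtain ⟨v, rfl⟩ : ∃ v, j = e v := ⟨e.symm j, (e.apply_symm_apply j).symm⟩
  rw [Matrix.reindex_apply, Matrix.submatrix_apply, Equiv.symm_apply_apply, Equiv.symm_apply_apply]
  have hcoe : ∀ u : Fin N ⊕ Fin N, ((e u : Fin (N + N)) : ℕ)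
      = Sum.elim (fun x : Fin N => 2 * (x : ℕ)) (fun x : Fin N => 2 * (x : ℕ) + 1) u := by
    rintro (x|x) <;> simp [he, chi, Fin.ext_iff] <;> omega
  rcases u with u|u <;> rcases v with v|v <;>
    simp only [psi, Matrix.fromBlocks, Matrix.of_apply, Sum.elim_inl, Sum.elim_inr, hcoe,
      Matrix.one_apply, Matrix.neg_apply, Matrix.zero_apply, Fin.ext_iff] <;>
    split_ifs <;> first | rfl | (exfalso; omega) | simp | (exfalso; omega)

def tau (n : ℕ) : Fin (2 * n) ≃ Fin (2 * n) where
  toFun k := ⟨if (k : ℕ) % 2 = 0 then (k : ℕ) + 1 else (k : ℕ) - 1, by split_ifs <;> omega⟩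
  invFun k := ⟨if (k : ℕ) % 2 = 0 then (k : ℕ) + 1 else (k : ℕ) - 1, by split_ifs <;> omega⟩
  left_inv k := by apply Fin.ext; simp only [Fin.val_mk]; split_ifs <;> omega
  right_inv k := by apply Fin.ext; simp only [Fin.val_mk]; split_ifs <;> omega

lemma tau_symm (n : ℕ) : (tau n).symm = tau n := rfl

lemma tau_tau {n : ℕ} (k : Fin (2 * n)) : tau n (tau n k) = k := by
  apply Fin.ext
  simp only [tau, Equiv.coe_fn_mk, Fin.val_mk]
  split_ifs <;> omega

variable {n : ℕ}

lemma sigma_apply' (i j : Fin (2 * n)) :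
    sigmaMat R (2 * n) i j = if j = tau n i then 1 else 0 := by
  simp only [sigmaMat, tau, Fin.ext_iff, Equiv.coe_fn_mk, Fin.val_mk]
  split_ifs <;> first | rfl | (exfalso; omega)

lemma sigma_mul (M : Matrix (Fin (2 * n)) (Fin (2 * n)) R) (i j : Fin (2 * n)) :
    (sigmaMat R (2 * n) * M) i j = M (tau n i) j := by
  rw [Matrix.mul_apply]
  rw [Finset.sum_eq_single (tau n i)]
  · rw [sigma_apply', if_pos rfl, one_mul]
  · intro k _ hk
    rw [sigma_apply', if_neg hk, zero_mul]
  · simp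

lemma mul_sigma (M : Matrix (Fin (2 * n)) (Fin (2 * n)) R) (i j : Fin (2 * n)) :
    (M * sigmaMat R (2 * n)) i j = M i (tau n j) := by
  rw [Matrix.mul_apply]
  rw [Finset.sum_eq_single (tau n j)]
  · rw [sigma_apply', if_pos (tau_tau j).symm, mul_one]
  · intro k _ hk
    rw [sigma_apply', if_neg, mul_zero]
    intro hc
    exact hk (by rw [hc, tau_tau])
  · simp

lemma sigma_conj (M : Matrix (Fin (2 * n)) (Fin (2 * n)) R) :
    sigmaMat R (2 * n) * M * sigmaMat R (2 * n) = Matrix.reindex (tau n) (tau n) M := by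
  ext i j
  rw [mul_sigma, sigma_mul, Matrix.reindex_apply, Matrix.submatrix_apply, tau_symm]

lemma sigma_sq : sigmaMat R (2 * n) * sigmaMat R (2 * n) = 1 := by
  ext i j
  rw [sigma_mul, sigma_apply', Matrix.one_apply]
  rw [tau_tau]
  by_cases h : j = i
  · rw [if_pos h, if_pos h.symm]
  · rw [if_neg h, if_neg (fun hc => h hc.symm)]

lemma sigma_transpose : (sigmaMat R (2 * n))ᵀ = sigmaMat R (2 * n) := by
  ext i j
  simp only [Matrix.transpose_apply, sigmaMat]
  congr 1
  exact propext or_comm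

lemma matCast_refl {a : ℕ} (h : a = a) (M : Matrix (Fin a) (Fin a) R) : matCast h M = M := by
  have : finCongr h = Equiv.refl (Fin a) := by
    ext x
    simp
  simp [matCast, this]

lemma transpose_reindex' {α β : Type} (e : α ≃ β) (M : Matrix α α R) :
    (Matrix.reindex e e M)ᵀ = Matrix.reindex e e Mᵀ := by
  simp [reindex_apply, transpose_submatrix]

theorem witt_class_independent_of_g'
    (R : Type) [CommRing R] (n : ℕ)
    (f₀ f₁ g h : Matrix (Fin (2 * n)) (Fin (2 * n)) R)
    (hf₀ : IsUnit f₀.det) (hf₁ : IsUnit f₁.det)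
    (hg : IsUnit g.det) (hh : IsUnit h.det) :
    WittEquiv
      (oplus (gᵀ * f₁ * g)
        (sigmaMat R (2 * n) * (gᵀ * f₀ * g)⁻¹ * sigmaMat R (2 * n)))
      (oplus (hᵀ * f₁ * h)
        (sigmaMat R (2 * n) * (hᵀ * f₀ * h)⁻¹ * sigmaMat R (2 * n))) := by
  set σ := sigmaMat R (2 * n) with hσ
  -- basic invertibility facts
  have hgT : IsUnit gᵀ.det := by rwa [Matrix.det_transpose]
  have hhT : IsUnit hᵀ.det := by rwa [Matrix.det_transpose]
  have hginv : IsUnit (g⁻¹).det := isUnit_nonsing_inv_det g hg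
  have hhinv : IsUnit (h⁻¹).det := isUnit_nonsing_inv_det h hh
  set C₁ : Matrix (Fin (2*n)) (Fin (2*n)) R := h⁻¹ * g with hC₁def
  set C₂ : Matrix (Fin (2*n)) (Fin (2*n)) R := σ * ((C₁ᵀ)⁻¹) * σ with hC₂def
  have hdetC₁ : IsUnit C₁.det := by
    rw [hC₁def, Matrix.det_mul]; exact hhinv.mul hg
  have hdetC₁T : IsUnit (C₁ᵀ).det := by rwa [Matrix.det_transpose]
  -- Whitehead ingredients
  have w1 : IsElementary (oplus C₁ C₁⁻¹) :=
    whitehead (Matrix.mul_nonsing_inv _ hdetC₁) (Matrix.nonsing_inv_mul _ hdetC₁)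
  have w2 : IsElementary (oplus ((C₁ᵀ)⁻¹) (C₁ᵀ)) :=
    whitehead (Matrix.nonsing_inv_mul _ hdetC₁T) (Matrix.mul_nonsing_inv _ hdetC₁T)
  -- the interleaving equivalence
  set e : Fin (2*n) ⊕ Fin (2*n) ≃ Fin (2*n + 2*n) := finSumFinEquiv.trans (chi (2*n)) with he
  set D : Matrix (Fin (2*n + 2*n)) (Fin (2*n + 2*n)) R :=
    Matrix.reindex e e (Matrix.fromBlocks (C₁⁻¹) 0 0 (C₁ᵀ)) with hD
  -- D preserves psi
  have hDψ : Dᵀ * psi R (2*n + 2*n) * D = psi R (2*n + 2*n) := by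
    rw [psi_reindex (2*n), hD, transpose_reindex', reindex_mul, reindex_mul]
    congr 1
    rw [fromBlocks_transpose, fromBlocks_multiply, fromBlocks_multiply]
    have e1 : (C₁⁻¹)ᵀ * C₁ᵀ = 1 := by
      rw [← Matrix.transpose_mul, Matrix.mul_nonsing_inv _ hdetC₁, Matrix.transpose_one]
    have e2 : C₁ * C₁⁻¹ = 1 := Matrix.mul_nonsing_inv _ hdetC₁
    simp only [Matrix.transpose_zero, Matrix.mul_zero, Matrix.zero_mul, Matrix.mul_one,
      Matrix.one_mul, add_zero, zero_add, Matrix.mul_neg, Matrix.neg_mul,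
      Matrix.transpose_transpose]
    rw [e1, e2, neg_zero]
  -- the elementary matrix E
  set EE : Matrix (Fin ((2*n + 2*n) + (2*n + 2*n))) (Fin ((2*n + 2*n) + (2*n + 2*n))) R :=
    oplus (oplus C₁ C₂) D with hEE
  -- elementariness
  have hC₂conj : C₂ = Matrix.reindex (tau n) (tau n) ((C₁ᵀ)⁻¹) := by
    rw [hC₂def, ← sigma_conj]
  have hEelem : IsElementary EE := by
    have hF₁ : IsElementary (oplus (oplus C₁ (1 : Matrix (Fin (2*n)) (Fin (2*n)) R))
        (oplus (C₁⁻¹) (1 : Matrix (Fin (2*n)) (Fin (2*n)) R))) := by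
      rw [oplus_swap]
      have h11 : IsElementary (oplus (1 : Matrix (Fin (2*n)) (Fin (2*n)) R) (1 : Matrix (Fin (2*n)) (Fin (2*n)) R)) := by
        rw [oplus_one]; exact IsElementary.one
      exact (oplus_elem w1 h11).reindex _
    have hF₂ : IsElementary (oplus (oplus (1 : Matrix (Fin (2*n)) (Fin (2*n)) R) C₂)
        (oplus (1 : Matrix (Fin (2*n)) (Fin (2*n)) R) (C₁ᵀ))) := by
      rw [oplus_swap]
      have hC₂C₁T : IsElementary (oplus C₂ (C₁ᵀ)) := by
        have hrefl : C₁ᵀ = Matrix.reindex (Equiv.refl (Fin (2*n))) (Equiv.refl (Fin (2*n))) (C₁ᵀ) := by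
          ext i j
          simp [reindex_apply]
        have hthis : oplus C₂ (C₁ᵀ) = oplus (Matrix.reindex (tau n) (tau n) ((C₁ᵀ)⁻¹))
            (Matrix.reindex (Equiv.refl (Fin (2*n))) (Equiv.refl (Fin (2*n))) (C₁ᵀ)) := by
          rw [← hC₂conj, ← hrefl]
        rw [hthis, oplus_reindex]
        exact w2.reindex _
      have h11 : IsElementary (oplus (1 : Matrix (Fin (2*n)) (Fin (2*n)) R) (1 : Matrix (Fin (2*n)) (Fin (2*n)) R)) := by
        rw [oplus_one]; exact IsElementary.one
      exact (oplus_elem h11 hC₂C₁T).reindex _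
    have hCore : IsElementary (oplus (oplus C₁ C₂) (oplus (C₁⁻¹) (C₁ᵀ))) := by
      have : oplus (oplus C₁ C₂) (oplus (C₁⁻¹) (C₁ᵀ))
          = oplus (oplus C₁ (1 : Matrix (Fin (2*n)) (Fin (2*n)) R))
              (oplus (C₁⁻¹) (1 : Matrix (Fin (2*n)) (Fin (2*n)) R))
            * oplus (oplus (1 : Matrix (Fin (2*n)) (Fin (2*n)) R) C₂)
              (oplus (1 : Matrix (Fin (2*n)) (Fin (2*n)) R) (C₁ᵀ)) := by
        rw [oplus_mul, oplus_mul, oplus_mul]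
        simp
      rw [this]
      exact hF₁.mul hF₂
    have hDalt : D = Matrix.reindex (finSumFinEquiv.symm.trans e) (finSumFinEquiv.symm.trans e)
        (oplus (C₁⁻¹) (C₁ᵀ)) := by
      rw [hD]
      unfold oplus
      ext i j
      simp [reindex_apply]
    have hrefl2 : oplus C₁ C₂ = Matrix.reindex (Equiv.refl (Fin (2*n + 2*n)))
        (Equiv.refl (Fin (2*n + 2*n))) (oplus C₁ C₂) := by
      ext i j
      simp [reindex_apply]
    have step : EE = oplus (Matrix.reindex (Equiv.refl (Fin (2*n + 2*n)))
        (Equiv.refl (Fin (2*n + 2*n))) (oplus C₁ C₂))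
        (Matrix.reindex (finSumFinEquiv.symm.trans e) (finSumFinEquiv.symm.trans e)
          (oplus (C₁⁻¹) (C₁ᵀ))) := by
      rw [hEE, hDalt, ← hrefl2]
    rw [step, oplus_reindex]
    exact hCore.reindex _
  -- congruence identities
  have hB1 : C₁ᵀ * (hᵀ * f₁ * h) * C₁ = gᵀ * f₁ * g := by
    rw [hC₁def, Matrix.transpose_mul, Matrix.transpose_nonsing_inv]
    calc gᵀ * (hᵀ)⁻¹ * (hᵀ * f₁ * h) * (h⁻¹ * g)
        = gᵀ * ((hᵀ)⁻¹ * hᵀ) * f₁ * (h * h⁻¹) * g := by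
          simp only [Matrix.mul_assoc]
      _ = gᵀ * f₁ * g := by
          rw [Matrix.nonsing_inv_mul _ hhT, Matrix.mul_nonsing_inv _ hh]
          simp only [Matrix.mul_one, Matrix.one_mul, Matrix.mul_assoc]
  have hC₂eq : C₂ = σ * (hᵀ * (gᵀ)⁻¹) * σ := by
    rw [hC₂def, hC₁def]
    congr 2
    rw [Matrix.transpose_mul, Matrix.transpose_nonsing_inv, Matrix.mul_inv_rev,
      Matrix.nonsing_inv_nonsing_inv _ hhT]
  have hB2 : C₂ᵀ * (σ * (hᵀ * f₀ * h)⁻¹ * σ) * C₂ = σ * (gᵀ * f₀ * g)⁻¹ * σ := by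
    have hC₂T : C₂ᵀ = σ * (g⁻¹ * h) * σ := by
      rw [hC₂eq]
      simp only [hσ, Matrix.transpose_mul, Matrix.transpose_transpose,
        Matrix.transpose_nonsing_inv, sigma_transpose, Matrix.mul_assoc]
    rw [hC₂T, hC₂eq]
    have hinv1 : (hᵀ * f₀ * h)⁻¹ = h⁻¹ * (f₀⁻¹ * (hᵀ)⁻¹) := by
      rw [Matrix.mul_inv_rev, Matrix.mul_inv_rev]
    have hinv2 : (gᵀ * f₀ * g)⁻¹ = g⁻¹ * (f₀⁻¹ * (gᵀ)⁻¹) := by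
      rw [Matrix.mul_inv_rev, Matrix.mul_inv_rev]
    rw [hinv1, hinv2]
    calc (σ * (g⁻¹ * h) * σ) * (σ * (h⁻¹ * (f₀⁻¹ * (hᵀ)⁻¹)) * σ) * (σ * (hᵀ * (gᵀ)⁻¹) * σ)
        = σ * (g⁻¹ * h) * (σ * σ) * (h⁻¹ * (f₀⁻¹ * (hᵀ)⁻¹)) * (σ * σ) * (hᵀ * (gᵀ)⁻¹) * σ := by
          simp only [Matrix.mul_assoc]
      _ = σ * (g⁻¹ * h) * (h⁻¹ * (f₀⁻¹ * (hᵀ)⁻¹)) * (hᵀ * (gᵀ)⁻¹) * σ := by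
          rw [hσ, sigma_sq]
          simp only [Matrix.mul_one, Matrix.one_mul, Matrix.mul_assoc]
      _ = σ * (g⁻¹ * (h * h⁻¹) * f₀⁻¹ * ((hᵀ)⁻¹ * hᵀ) * (gᵀ)⁻¹) * σ := by
          simp only [Matrix.mul_assoc]
      _ = σ * (g⁻¹ * (f₀⁻¹ * (gᵀ)⁻¹)) * σ := by
          rw [Matrix.mul_nonsing_inv _ hh, Matrix.nonsing_inv_mul _ hhT]
          simp only [Matrix.mul_one, Matrix.one_mul, Matrix.mul_assoc]
  -- main equation
  refine ⟨0, EE, hEelem, ?_⟩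
  rw [matCast_refl]
  show oplus (oplus (gᵀ * f₁ * g) (σ * (gᵀ * f₀ * g)⁻¹ * σ)) (psi R (2*n + 2*n))
      = EEᵀ * (oplus (oplus (hᵀ * f₁ * h) (σ * (hᵀ * f₀ * h)⁻¹ * σ)) (psi R (2*n + 2*n))) * EE
  rw [hEE, oplus_transpose, oplus_transpose, oplus_mul, oplus_mul, oplus_mul, oplus_mul,
    hDψ, hB1, hB2]

end Aux

/-- Lemma `invariant`. The class of
`(gᵗf₁g) ⊥ σ_{2n}(gᵗf₀g)⁻¹σ_{2n}` under `∼` does not depend on the choice of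
the invertible matrix `g`. -/
theorem witt_class_independent_of_g
    (R : Type) [CommRing R] (h2 : IsUnit (2 : R)) (n : ℕ)
    (f₀ f₁ g h : Matrix (Fin (2 * n)) (Fin (2 * n)) R)
    (hf₀skew : f₀ᵀ = -f₀) (hf₁skew : f₁ᵀ = -f₁)
    (hf₀ : IsUnit f₀.det) (hf₁ : IsUnit f₁.det)
    (hg : IsUnit g.det) (hh : IsUnit h.det) :
    WittEquiv
      (oplus (gᵀ * f₁ * g)
        (sigmaMat R (2 * n) * (gᵀ * f₀ * g)⁻¹ * sigmaMat R (2 * n)))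
      (oplus (hᵀ * f₁ * h)
        (sigmaMat R (2 * n) * (hᵀ * f₀ * h)⁻¹ * sigmaMat R (2 * n))) := by
  exact witt_class_independent_of_g' R n f₀ f₁ g h hf₀ hf₁ hg hh
end

section
/- Let R be a commutative ring with 2 invertible, and let f_0, f_1, f_2 ∈ GL_{2n}(R) be invertible skew-symmetric matrices. Then (f_1 ⊥ σ_{2n}f_0^{-1}σ_{2n}) ⊥ (f_2 ⊥ σ_{2n}f_1^{-1}σ_{2n}) ∼ f_2 ⊥ σ_{2n}f_0^{-1}σ_{2n}. -/
open Matrix Polynomial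

set_option linter.unusedSectionVars false
open Matrix
namespace Elem

variable {ι κ : Type} [DecidableEq ι] [Fintype ι] [DecidableEq κ] [Fintype κ]
  {R : Type} [CommRing R]

lemma one : IsElementary (1 : Matrix ι ι R) := Submonoid.one_mem _

lemma mul {A B : Matrix ι ι R} (hA : IsElementary A) (hB : IsElementary B) :
    IsElementary (A * B) := Submonoid.mul_mem _ hA hB

lemma gen {i j : ι} (h : i ≠ j) (r : R) :
    IsElementary (1 + single i j r) :=
  Submonoid.subset_closure ⟨i, j, r, h, rfl⟩

/-- key unipotent lemma -/
lemma one_add (M : Matrix ι ι R)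
    (hd : ∀ i j, M i j ≠ 0 → i ≠ j)
    (ho : ∀ i j k l, M i j ≠ 0 → M k l ≠ 0 → j ≠ k) :
    IsElementary (1 + M) := by
  classical
  have key : ∀ s : Finset (ι × ι),
      IsElementary (1 + ∑ p ∈ s, single p.1 p.2 (M p.1 p.2)) := by
    intro s
    induction s using Finset.induction_on with
    | empty => simpa using (one : IsElementary (1 : Matrix ι ι R))
    | @insert p s hp ih =>
      have hmulz : single p.1 p.2 (M p.1 p.2) *
          (∑ q ∈ s, single q.1 q.2 (M q.1 q.2)) = 0 := by
        rw [Finset.mul_sum]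
        apply Finset.sum_eq_zero
        intro q _
        by_cases h1 : M p.1 p.2 = 0
        · simp [h1]
        by_cases h2 : M q.1 q.2 = 0
        · simp [h2]
        exact Matrix.single_mul_single_of_ne _ _ _ _ (ho _ _ _ _ h1 h2) _
      have hfac : (1 + single p.1 p.2 (M p.1 p.2)) *
          (1 + ∑ q ∈ s, single q.1 q.2 (M q.1 q.2)) =
          1 + ∑ q ∈ insert p s, single q.1 q.2 (M q.1 q.2) := by
        rw [Finset.sum_insert hp, add_mul, one_mul, mul_add, mul_one, hmulz, add_zero]
        abel
      rw [← hfac]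
      apply mul ?_ ih
      by_cases h1 : M p.1 p.2 = 0
      · simpa [h1] using (one : IsElementary (1 : Matrix ι ι R))
      · exact gen (hd _ _ h1) _
  have hM : M = ∑ p ∈ (Finset.univ : Finset (ι × ι)), single p.1 p.2 (M p.1 p.2) := by
    rw [Fintype.sum_prod_type]
    exact matrix_eq_sum_single M
  rw [show (1 + M : Matrix ι ι R) =
    1 + ∑ p ∈ (Finset.univ : Finset (ι × ι)), single p.1 p.2 (M p.1 p.2) by rw [← hM]]
  exact key _

/-- inverses -/
lemma inv {A : Matrix ι ι R} (hA : IsElementary A) :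
    ∃ B : Matrix ι ι R, IsElementary B ∧ A * B = 1 ∧ B * A = 1 := by
  induction hA using Submonoid.closure_induction with
  | one => exact ⟨1, one, by simp, by simp⟩
  | mul x y _ _ hx hy =>
    obtain ⟨x', hx', hxx, hxx'⟩ := hx
    obtain ⟨y', hy', hyy, hyy'⟩ := hy
    refine ⟨y' * x', mul hy' hx', ?_, ?_⟩
    · rw [mul_assoc, ← mul_assoc y, hyy, one_mul, hxx]
    · rw [mul_assoc, ← mul_assoc x', hxx', one_mul, hyy']
  | mem x hx =>
    obtain ⟨i, j, r, hij, rfl⟩ := hx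
    have key : ∀ a b : R, (1 + single i j a) * (1 + single i j b) =
        1 + single i j (a + b) := by
      intro a b
      rw [mul_add, mul_one, add_mul, one_mul,
        Matrix.single_mul_single_of_ne a i j i (Ne.symm hij), single_add]
      abel
    exact ⟨1 + single i j (-r), gen hij _,
      by rw [key]; simp, by rw [key]; simp⟩

lemma reindex_std (e : ι ≃ κ) (i j : ι) (r : R) :
    Matrix.reindex e e (single i j r) = single (e i) (e j) r := by
  have e1 : ∀ (x : ι) (a : κ), (x = e.symm a) ↔ (e x = a) := fun x a => by
    rw [← Equiv.apply_eq_iff_eq e, Equiv.apply_symm_apply]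
  ext a b
  simp only [Matrix.reindex_apply, Matrix.submatrix_apply, single, Matrix.of_apply]
  simp only [e1]

lemma reindex_elem (e : ι ≃ κ) {A : Matrix ι ι R} (hA : IsElementary A) :
    IsElementary (Matrix.reindex e e A) := by
  induction hA using Submonoid.closure_induction with
  | one => simpa using (one : IsElementary (1 : Matrix κ κ R))
  | mul x y _ _ hx hy =>
    have : Matrix.reindex e e (x * y) = Matrix.reindex e e x * Matrix.reindex e e y := by
      simp [Matrix.reindex_apply, Matrix.submatrix_mul_equiv]
    rw [this]; exact mul hx hy
  | mem x hx =>
    obtain ⟨i, j, r, hij, rfl⟩ := hx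
    have : Matrix.reindex e e (1 + single i j r) =
        1 + single (e i) (e j) r := by
      have : Matrix.reindex e e (1 + single i j r) =
          Matrix.reindex e e 1 + Matrix.reindex e e (single i j r) := by
        ext a b; simp [Matrix.reindex_apply, Matrix.submatrix_apply, Matrix.one_apply]
        exact congrFun (congrFun (reindex_std e i j r) a) b
      rw [this, reindex_std]
      congr 1
      simp [Matrix.reindex_apply, Matrix.submatrix_one_equiv]
    rw [this]
    exact gen (by simpa using hij) r

end Elem
namespace Elem

variable {ι κ ρ : Type} [DecidableEq ι] [Fintype ι] [DecidableEq κ] [Fintype κ]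
  [DecidableEq ρ] [Fintype ρ] {R : Type} [CommRing R]

/-- block upper unipotent -/
lemma upper (A : Matrix ι κ R) :
    IsElementary (fromBlocks (1 : Matrix ι ι R) A 0 (1 : Matrix κ κ R)) := by
  have h : fromBlocks (1 : Matrix ι ι R) A 0 1 = (1 : Matrix (ι ⊕ κ) (ι ⊕ κ) R) + fromBlocks 0 A 0 0 := by
    ext (i|i) (j|j) <;> simp [fromBlocks, Matrix.one_apply]
  rw [h]
  apply one_add
  · rintro (i|i) (j|j) hne <;> simp [fromBlocks] at hne ⊢
  · rintro (i|i) (j|j) (k|k) (l|l) h1 h2 <;> simp [fromBlocks] at h1 h2 ⊢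

lemma lower (A : Matrix κ ι R) :
    IsElementary (fromBlocks (1 : Matrix ι ι R) 0 A (1 : Matrix κ κ R)) := by
  have h : fromBlocks (1 : Matrix ι ι R) 0 A 1 = (1 : Matrix (ι ⊕ κ) (ι ⊕ κ) R) + fromBlocks 0 0 A 0 := by
    ext (i|i) (j|j) <;> simp [fromBlocks, Matrix.one_apply]
  rw [h]
  apply one_add
  · rintro (i|i) (j|j) hne <;> simp [fromBlocks] at hne ⊢
  · rintro (i|i) (j|j) (k|k) (l|l) h1 h2 <;> simp [fromBlocks] at h1 h2 ⊢

/-- the block swap matrix -/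
lemma swapElem :
    IsElementary (fromBlocks (0 : Matrix ι ι R) 1 (-1) (0 : Matrix ι ι R)) := by
  have h : fromBlocks (0 : Matrix ι ι R) 1 (-1) (0 : Matrix ι ι R) =
      fromBlocks 1 1 0 1 * fromBlocks 1 0 (-1) 1 * fromBlocks 1 1 0 1 := by
    simp [fromBlocks_multiply, fromBlocks_add]
  rw [h]
  exact mul (mul (upper _) (lower _)) (upper _)

/-- embeddings of elementary matrices into block diagonal -/
lemma embed_left {E : Matrix ι ι R} (hE : IsElementary E) :
    IsElementary (fromBlocks E 0 0 (1 : Matrix κ κ R)) := by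
  induction hE using Submonoid.closure_induction with
  | one => rw [fromBlocks_one]; exact one
  | mul x y _ _ hx hy =>
    have : fromBlocks (x * y) 0 0 (1 : Matrix κ κ R) =
        fromBlocks x 0 0 1 * fromBlocks y 0 0 1 := by
      simp [fromBlocks_multiply]
    rw [this]; exact mul hx hy
  | mem x hx =>
    obtain ⟨i, j, r, hij, rfl⟩ := hx
    have : fromBlocks (1 + single i j r) 0 0 (1 : Matrix κ κ R) =
        1 + single (Sum.inl i : ι ⊕ κ) (Sum.inl j) r := by
      rw [← fromBlocks_one (l := ι) (m := κ)]
      have : (fromBlocks (1 + single i j r) 0 0 (1 : Matrix κ κ R)) =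
          fromBlocks 1 0 0 1 + fromBlocks (single i j r) 0 0 0 := by
        rw [fromBlocks_add]; congr 1 <;> simp
      rw [this]
      congr 1
      ext (a|a) (b|b) <;> simp [fromBlocks, single]
    rw [this]
    exact gen (by simp [hij]) r

lemma embed_right {E : Matrix κ κ R} (hE : IsElementary E) :
    IsElementary (fromBlocks (1 : Matrix ι ι R) 0 0 E) := by
  induction hE using Submonoid.closure_induction with
  | one => rw [fromBlocks_one]; exact one
  | mul x y _ _ hx hy =>
    have : fromBlocks (1 : Matrix ι ι R) 0 0 (x * y) =
        fromBlocks 1 0 0 x * fromBlocks 1 0 0 y := by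
      simp [fromBlocks_multiply]
    rw [this]; exact mul hx hy
  | mem x hx =>
    obtain ⟨i, j, r, hij, rfl⟩ := hx
    have : fromBlocks (1 : Matrix ι ι R) 0 0 (1 + single i j r) =
        1 + single (Sum.inr i : ι ⊕ κ) (Sum.inr j) r := by
      rw [← fromBlocks_one (l := ι) (m := κ)]
      have : (fromBlocks (1 : Matrix ι ι R) 0 0 (1 + single i j r)) =
          fromBlocks 1 0 0 1 + fromBlocks 0 0 0 (single i j r) := by
        rw [fromBlocks_add]; congr 1 <;> simp
      rw [this]
      congr 1
      ext (a|a) (b|b) <;> simp [fromBlocks, single]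
    rw [this]
    exact gen (by simp [hij]) r

/-- Congruence by an elementary matrix. -/
def Cong {ι : Type} [DecidableEq ι] [Fintype ι] (A B : Matrix ι ι R) : Prop :=
  ∃ E : Matrix ι ι R, IsElementary E ∧ A = Eᵀ * B * E

lemma Cong.refl (A : Matrix ι ι R) : Cong A A := ⟨1, one, by simp⟩

lemma Cong.trans {A B C : Matrix ι ι R} (h1 : Cong A B) (h2 : Cong B C) : Cong A C := by
  obtain ⟨E1, hE1, he1⟩ := h1
  obtain ⟨E2, hE2, he2⟩ := h2
  exact ⟨E2 * E1, mul hE2 hE1, by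
    rw [he1, he2, Matrix.transpose_mul]
    noncomm_ring⟩

lemma Cong.symm {A B : Matrix ι ι R} (h : Cong A B) : Cong B A := by
  obtain ⟨E, hE, he⟩ := h
  obtain ⟨F, hF, hEF, hFE⟩ := inv hE
  refine ⟨F, hF, ?_⟩
  have hFt : Fᵀ * Eᵀ = 1 := by rw [← Matrix.transpose_mul, hEF, Matrix.transpose_one]
  have hEt : Eᵀ * Fᵀ = 1 := by rw [← Matrix.transpose_mul, hFE, Matrix.transpose_one]
  calc B = (Fᵀ * Eᵀ) * B * (E * F) := by rw [hFt, hEF]; simp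
    _ = Fᵀ * (Eᵀ * B * E) * F := by noncomm_ring
    _ = Fᵀ * A * F := by rw [← he]

lemma Cong.reindex (e : ι ≃ κ) {A B : Matrix ι ι R} (h : Cong A B) :
    Cong (Matrix.reindex e e A) (Matrix.reindex e e B) := by
  obtain ⟨E, hE, he⟩ := h
  refine ⟨Matrix.reindex e e E, reindex_elem e hE, ?_⟩
  have ht : (Matrix.reindex e e E)ᵀ = Matrix.reindex e e Eᵀ := by
    ext a b; simp [Matrix.reindex_apply, Matrix.submatrix_apply, Matrix.transpose_apply]
  have h2 : Matrix.reindex e e Eᵀ * Matrix.reindex e e B * Matrix.reindex e e E =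
      Matrix.reindex e e (Eᵀ * B * E) := by
    simp [Matrix.reindex_apply, Matrix.submatrix_mul_equiv]
  rw [he, ht, h2]

lemma Cong.fromBlocks_left {A A' : Matrix ι ι R} (B : Matrix κ κ R) (h : Cong A A') :
    Cong (fromBlocks A 0 0 B) (fromBlocks A' 0 0 B) := by
  obtain ⟨E, hE, he⟩ := h
  refine ⟨fromBlocks E 0 0 1, embed_left hE, ?_⟩
  rw [fromBlocks_transpose, he]
  simp [fromBlocks_multiply]

lemma Cong.fromBlocks_right {B B' : Matrix κ κ R} (A : Matrix ι ι R) (h : Cong B B') :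
    Cong (fromBlocks A 0 0 B) (fromBlocks A 0 0 B') := by
  obtain ⟨E, hE, he⟩ := h
  refine ⟨fromBlocks 1 0 0 E, embed_right hE, ?_⟩
  rw [fromBlocks_transpose, he]
  simp [fromBlocks_multiply]

lemma Cong.swap (A B : Matrix ι ι R) :
    Cong (fromBlocks A 0 0 B) (fromBlocks B 0 0 A) := by
  refine ⟨fromBlocks 0 1 (-1) 0, swapElem, ?_⟩
  rw [fromBlocks_transpose]
  simp [fromBlocks_multiply]

end Elem
namespace Elem

variable {ι κ ρ : Type} [DecidableEq ι] [Fintype ι] [DecidableEq κ] [Fintype κ]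
  [DecidableEq ρ] [Fintype ρ] {R : Type} [CommRing R]

/-- swap of blocks 0 and 2 in a 4-block diagonal matrix -/
lemma Cong.swap02 (A C : Matrix ι ι R) (B : Matrix κ κ R) (D : Matrix ρ ρ R) :
    Cong (fromBlocks (fromBlocks A 0 0 B) 0 0 (fromBlocks C 0 0 D))
         (fromBlocks (fromBlocks C 0 0 B) 0 0 (fromBlocks A 0 0 D)) := by
  refine ⟨fromBlocks 1 (fromBlocks 1 0 0 0) 0 1 * fromBlocks 1 0 (fromBlocks (-1) 0 0 0) 1 *
      fromBlocks 1 (fromBlocks 1 0 0 0) 0 1,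
    mul (mul (upper _) (lower _)) (upper _), ?_⟩
  rw [Matrix.transpose_mul, Matrix.transpose_mul]
  rw [show ∀ X : Matrix ((ι ⊕ κ) ⊕ (ι ⊕ ρ)) ((ι ⊕ κ) ⊕ (ι ⊕ ρ)) R,
    (fromBlocks 1 (fromBlocks 1 0 0 0) 0 1)ᵀ * ((fromBlocks 1 0 (fromBlocks (-1) 0 0 0) 1)ᵀ *
      (fromBlocks 1 (fromBlocks 1 0 0 0) 0 1)ᵀ) * X *
      (fromBlocks 1 (fromBlocks 1 0 0 0) 0 1 * fromBlocks 1 0 (fromBlocks (-1) 0 0 0) 1 *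
        fromBlocks 1 (fromBlocks 1 0 0 0) 0 1) =
    (fromBlocks 1 (fromBlocks 1 0 0 0) 0 1)ᵀ * ((fromBlocks 1 0 (fromBlocks (-1) 0 0 0) 1)ᵀ *
      ((fromBlocks 1 (fromBlocks 1 0 0 0) 0 1)ᵀ * X * fromBlocks 1 (fromBlocks 1 0 0 0) 0 1) *
      fromBlocks 1 0 (fromBlocks (-1) 0 0 0) 1) * fromBlocks 1 (fromBlocks 1 0 0 0) 0 1
    from fun X => by noncomm_ring]
  have step1 : (fromBlocks 1 (fromBlocks 1 0 0 0) 0 1)ᵀ *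
      fromBlocks (fromBlocks C 0 0 B) 0 0 (fromBlocks A 0 0 D) *
      fromBlocks 1 (fromBlocks 1 0 0 0) 0 1 =
      fromBlocks (fromBlocks C 0 0 B) (fromBlocks C 0 0 0)
        (fromBlocks C 0 0 0) (fromBlocks (C + A) 0 0 D) := by
    simp only [fromBlocks_transpose, transpose_one, transpose_zero, fromBlocks_multiply,
      Matrix.one_mul, Matrix.mul_one, Matrix.zero_mul, Matrix.mul_zero, add_zero, zero_add,
      neg_one_mul, Matrix.mul_neg, Matrix.neg_mul, neg_neg, neg_zero, fromBlocks_add,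
      neg_smul, one_smul, smul_zero, neg_add_rev, add_neg_cancel, neg_add_cancel]
    all_goals (rw [Matrix.fromBlocks_inj]; refine ⟨?_, ?_, ?_, ?_⟩ <;> (try rw [Matrix.fromBlocks_inj]) <;> (try refine ⟨?_, ?_, ?_, ?_⟩) <;> (try abel) <;> (try simp))
  rw [step1]
  have step2 : (fromBlocks 1 0 (fromBlocks (-1) 0 0 0) 1)ᵀ *
      (fromBlocks (fromBlocks C 0 0 B) (fromBlocks C 0 0 0)
        (fromBlocks C 0 0 0) (fromBlocks (C + A) 0 0 D)) *
      fromBlocks 1 0 (fromBlocks (-1) 0 0 0) 1 =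
      fromBlocks (fromBlocks A 0 0 B) (fromBlocks (-A) 0 0 0)
        (fromBlocks (-A) 0 0 0) (fromBlocks (C + A) 0 0 D) := by
    simp only [fromBlocks_transpose, transpose_one, transpose_zero, transpose_neg,
      fromBlocks_multiply,
      Matrix.one_mul, Matrix.mul_one, Matrix.zero_mul, Matrix.mul_zero, add_zero, zero_add,
      neg_one_mul, Matrix.mul_neg, Matrix.neg_mul, neg_neg, neg_zero, fromBlocks_add,
      neg_smul, one_smul, smul_zero, neg_add_rev, add_neg_cancel, neg_add_cancel]
    all_goals (rw [Matrix.fromBlocks_inj]; refine ⟨?_, ?_, ?_, ?_⟩ <;> (try rw [Matrix.fromBlocks_inj]) <;> (try refine ⟨?_, ?_, ?_, ?_⟩) <;> (try abel) <;> (try simp))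
  rw [step2]
  have step3 : (fromBlocks 1 (fromBlocks 1 0 0 0) 0 1)ᵀ *
      (fromBlocks (fromBlocks A 0 0 B) (fromBlocks (-A) 0 0 0)
        (fromBlocks (-A) 0 0 0) (fromBlocks (C + A) 0 0 D)) *
      fromBlocks 1 (fromBlocks 1 0 0 0) 0 1 =
      fromBlocks (fromBlocks A 0 0 B) 0 0 (fromBlocks C 0 0 D) := by
    simp only [fromBlocks_transpose, transpose_one, transpose_zero, transpose_neg,
      fromBlocks_multiply,
      Matrix.one_mul, Matrix.mul_one, Matrix.zero_mul, Matrix.mul_zero, add_zero, zero_add,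
      neg_one_mul, Matrix.mul_neg, Matrix.neg_mul, neg_neg, neg_zero, fromBlocks_add,
      neg_smul, one_smul, smul_zero, neg_add_rev, add_neg_cancel, neg_add_cancel]
    all_goals (rw [Matrix.fromBlocks_inj]; refine ⟨?_, ?_, ?_, ?_⟩ <;> (try rw [Matrix.fromBlocks_inj]) <;> (try refine ⟨?_, ?_, ?_, ?_⟩) <;> (try abel) <;> (try simp))
  rw [step3]

end Elem
namespace Elem

variable {ι : Type} [DecidableEq ι] [Fintype ι] {R : Type} [CommRing R]

/-- Core lemma: `f ⊥ σf⁻¹σ` is elementarily congruent to the standard block `[[0,-σ],[σ,0]]`. -/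
lemma core_sum (f finv σ : Matrix ι ι R) (c : R) (hc : 2 * c = 1)
    (hσt : σᵀ = σ) (hσσ : σ * σ = 1) (hft : fᵀ = -f)
    (hfi : f * finv = 1) (hif : finv * f = 1) :
    Cong (fromBlocks 0 (-σ) σ 0) (fromBlocks f 0 0 (σ * finv * σ)) := by
  set g : Matrix ι ι R := σ * finv * σ with hg
  have hinvt : finvᵀ = -finv := by
    have h1 : finvᵀ * fᵀ = 1 := by rw [← Matrix.transpose_mul, hfi, Matrix.transpose_one]
    have h2 : finvᵀ * f = -1 := by
      have : f = -fᵀ := by rw [hft, neg_neg]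
      rw [this, Matrix.mul_neg, h1]
    calc finvᵀ = finvᵀ * (f * finv) := by rw [hfi, Matrix.mul_one]
      _ = (finvᵀ * f) * finv := by rw [Matrix.mul_assoc]
      _ = -finv := by rw [h2]; simp
  have hgt : gᵀ = -g := by
    rw [hg, Matrix.transpose_mul, Matrix.transpose_mul, hσt, hinvt]
    simp [Matrix.mul_assoc]
  have hgA : g * (σ * f) = σ := by
    rw [hg]
    calc σ * finv * σ * (σ * f) = σ * finv * (σ * σ) * f := by
          simp only [Matrix.mul_assoc]
      _ = σ := by rw [hσσ]; simp [Matrix.mul_assoc, hif]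
  have hAtg : (σ * f)ᵀ * g = -σ := by
    rw [Matrix.transpose_mul, hσt, hft, hg]
    calc (-f) * σ * (σ * finv * σ) = -(f * ((σ * σ) * (finv * σ))) := by
          simp only [Matrix.neg_mul, Matrix.mul_assoc]
      _ = -(f * finv * σ) := by rw [hσσ]; simp [Matrix.mul_assoc]
      _ = -σ := by rw [hfi]; simp
  have hAtgA : (σ * f)ᵀ * g * σ * f = -f := by
    calc (σ * f)ᵀ * g * σ * f = ((σ * f)ᵀ * g) * (σ * f) := by rw [Matrix.mul_assoc, Matrix.mul_assoc]
      _ = (-σ) * (σ * f) := by rw [hAtg]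
      _ = -f := by rw [Matrix.neg_mul, ← Matrix.mul_assoc, hσσ, Matrix.one_mul]
  set B : Matrix ι ι R := -(c • (σ * g)) with hB
  have hBt : Bᵀ = c • (g * σ) := by
    rw [hB, Matrix.transpose_neg, Matrix.transpose_smul, Matrix.transpose_mul, hσt, hgt]
    simp
  have hσB : σ * B = -(c • g) := by
    rw [hB, Matrix.mul_neg, Matrix.mul_smul]
    rw [show σ * (σ * g) = (σ * σ) * g by rw [Matrix.mul_assoc], hσσ, Matrix.one_mul]
  have hBtσ : Bᵀ * σ = c • g := by
    rw [hBt, Matrix.smul_mul, Matrix.mul_assoc, hσσ, Matrix.mul_one]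
  have h2 : (c • g) + (c • g) = g := by
    rw [← add_smul, ← two_mul, hc, one_smul]
  have hcancel : σ * B + (Bᵀ * (-σ) + g) = 0 := by
    rw [hσB, Matrix.mul_neg, hBtσ]
    have h3 : -(c • g) + (-(c • g) + g) = g - ((c • g) + (c • g)) := by abel
    rw [h3, h2, sub_self]
  refine ⟨fromBlocks 1 0 (σ * f) 1 * fromBlocks 1 B 0 1,
    mul (lower _) (upper _), ?_⟩
  rw [Matrix.transpose_mul]
  have assoc : ∀ X : Matrix (ι ⊕ ι) (ι ⊕ ι) R,
      (fromBlocks 1 B 0 1)ᵀ * (fromBlocks 1 0 (σ * f) 1)ᵀ * X *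
        (fromBlocks 1 0 (σ * f) 1 * fromBlocks 1 B 0 1) =
      (fromBlocks 1 B 0 1)ᵀ * ((fromBlocks 1 0 (σ * f) 1)ᵀ * X *
        fromBlocks 1 0 (σ * f) 1) * fromBlocks 1 B 0 1 := by
    intro X; noncomm_ring
  rw [assoc]
  have step1 : (fromBlocks 1 0 (σ * f) 1)ᵀ * fromBlocks f 0 0 g * fromBlocks 1 0 (σ * f) 1 =
      fromBlocks 0 (-σ) σ g := by
    simp only [fromBlocks_transpose, transpose_one, transpose_zero, fromBlocks_multiply,
      Matrix.one_mul, Matrix.mul_one, Matrix.zero_mul, Matrix.mul_zero, add_zero, zero_add]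
    rw [Matrix.fromBlocks_inj]
    refine ⟨?_, by rw [hAtg], by rw [hgA], rfl⟩
    simp only [← Matrix.mul_assoc]
    rw [hAtgA]
    simp
  rw [step1]
  have step2 : (fromBlocks 1 B 0 1)ᵀ * fromBlocks 0 (-σ) σ g * fromBlocks 1 B 0 1 =
      fromBlocks 0 (-σ) σ 0 := by
    simp only [fromBlocks_transpose, transpose_one, transpose_zero, fromBlocks_multiply,
      Matrix.one_mul, Matrix.mul_one, Matrix.zero_mul, Matrix.mul_zero, add_zero, zero_add]
    rw [Matrix.fromBlocks_inj]
    refine ⟨by simp, rfl, rfl, ?_⟩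
    exact hcancel
  rw [step2]

end Elem
namespace Elem

variable {R : Type} [CommRing R]

lemma finSum_symm_lt {a b : ℕ} (i : Fin (a + b)) (h : (i : ℕ) < a) :
    finSumFinEquiv.symm i = Sum.inl (⟨(i : ℕ), h⟩ : Fin a) := by
  rw [Equiv.symm_apply_eq, finSumFinEquiv_apply_left]
  exact Fin.ext (by simp)

lemma finSum_symm_ge {a b : ℕ} (i : Fin (a + b)) (h : a ≤ (i : ℕ)) :
    finSumFinEquiv.symm i = Sum.inr (⟨(i : ℕ) - a, by omega⟩ : Fin b) := by
  rw [Equiv.symm_apply_eq, finSumFinEquiv_apply_right]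
  exact Fin.ext (by simp; omega)

lemma oplus_apply {a b : ℕ} (M : Matrix (Fin a) (Fin a) R) (N : Matrix (Fin b) (Fin b) R)
    (i j : Fin (a + b)) :
    oplus M N i j =
      if h : (i : ℕ) < a then
        (if h' : (j : ℕ) < a then M ⟨i, h⟩ ⟨j, h'⟩ else 0)
      else
        (if h' : (j : ℕ) < a then 0 else N ⟨(i : ℕ) - a, by omega⟩ ⟨(j : ℕ) - a, by omega⟩) := by
  unfold oplus
  rw [Matrix.reindex_apply, Matrix.submatrix_apply]
  by_cases hi : (i : ℕ) < a <;> by_cases hj : (j : ℕ) < a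
  · rw [finSum_symm_lt i hi, finSum_symm_lt j hj, dif_pos hi, dif_pos hj]
    simp [Matrix.fromBlocks]
  · rw [finSum_symm_lt i hi, finSum_symm_ge j (not_lt.mp hj), dif_pos hi, dif_neg hj]
    simp [Matrix.fromBlocks]
  · rw [finSum_symm_ge i (not_lt.mp hi), finSum_symm_lt j hj, dif_neg hi, dif_pos hj]
    simp [Matrix.fromBlocks]
  · rw [finSum_symm_ge i (not_lt.mp hi), finSum_symm_ge j (not_lt.mp hj), dif_neg hi, dif_neg hj]
    simp [Matrix.fromBlocks]

lemma matCast_apply {a b : ℕ} (h : a = b) (M : Matrix (Fin a) (Fin a) R) (i j : Fin b) :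
    matCast h M i j = M ⟨(i : ℕ), by omega⟩ ⟨(j : ℕ), by omega⟩ := by
  unfold matCast
  rw [Matrix.reindex_apply, Matrix.submatrix_apply]
  congr 1 <;> exact Fin.ext (by simp)

/-- associativity with cast -/
lemma oplus_assoc {a b c : ℕ} (h : a + (b + c) = a + b + c)
    (A : Matrix (Fin a) (Fin a) R) (B : Matrix (Fin b) (Fin b) R)
    (C : Matrix (Fin c) (Fin c) R) :
    matCast h (oplus A (oplus B C)) = oplus (oplus A B) C := by
  ext i j
  rw [matCast_apply]
  simp only [oplus_apply, Fin.val_mk]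
  split_ifs <;> first
    | rfl
    | omega
    | (congr 1 <;> exact Fin.ext (by simp only [Fin.val_mk]; omega))

end Elem
namespace Elem

variable {R : Type} [CommRing R]

def pairIdx {n : ℕ} (i : Fin (2 * n)) : Fin (2 * n) :=
  ⟨if (i : ℕ) % 2 = 0 then (i : ℕ) + 1 else (i : ℕ) - 1, by
    have := i.isLt; split <;> omega⟩

lemma pair_pair {n : ℕ} (i : Fin (2 * n)) : pairIdx (pairIdx i) = i := by
  have := i.isLt
  apply Fin.ext
  simp only [pairIdx]
  split <;> split <;> omega

lemma pair_inj {n : ℕ} {i j : Fin (2 * n)} (h : pairIdx i = pairIdx j) : i = j := by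
  rw [← pair_pair i, h, pair_pair]

lemma pair_flip {n : ℕ} {i j : Fin (2 * n)} (h : i = pairIdx j) : j = pairIdx i := by
  rw [h, pair_pair]

lemma pair_parity {n : ℕ} (i : Fin (2 * n)) :
    ((pairIdx i : ℕ) % 2 = 0) ↔ ¬ ((i : ℕ) % 2 = 0) := by
  have := i.isLt
  simp only [pairIdx]
  split <;> omega

lemma sigma_apply {n : ℕ} (i j : Fin (2 * n)) :
    sigmaMat R (2 * n) i j = if j = pairIdx i then 1 else 0 := by
  have hi := i.isLt; have hj := j.isLt
  have hp : (j = pairIdx i) ↔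
      ((j : ℕ) = if (i : ℕ) % 2 = 0 then (i : ℕ) + 1 else (i : ℕ) - 1) := by
    rw [Fin.ext_iff]; rfl
  simp only [sigmaMat, hp]
  split_ifs <;> first | rfl | omega

lemma psi_apply {n : ℕ} (i j : Fin (2 * n)) :
    psi R (2 * n) i j = if j = pairIdx i then (if (i : ℕ) % 2 = 0 then 1 else -1) else 0 := by
  have hi := i.isLt; have hj := j.isLt
  have hp : (j = pairIdx i) ↔
      ((j : ℕ) = if (i : ℕ) % 2 = 0 then (i : ℕ) + 1 else (i : ℕ) - 1) := by
    rw [Fin.ext_iff]; rfl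
  simp only [psi, hp]
  split_ifs <;> first | rfl | omega

lemma mul_pair {n : ℕ} (M N : Matrix (Fin (2 * n)) (Fin (2 * n)) R)
    (hM : ∀ i j, j ≠ pairIdx i → M i j = 0) (i j : Fin (2 * n)) :
    (M * N) i j = M i (pairIdx i) * N (pairIdx i) j := by
  rw [Matrix.mul_apply]
  exact Finset.sum_eq_single (pairIdx i) (fun k _ hk => by rw [hM i k hk, zero_mul]) (by simp)

lemma sigma_zero {n : ℕ} (i j : Fin (2 * n)) (h : j ≠ pairIdx i) :
    sigmaMat R (2 * n) i j = 0 := by rw [sigma_apply, if_neg h]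

lemma psi_zero {n : ℕ} (i j : Fin (2 * n)) (h : j ≠ pairIdx i) :
    psi R (2 * n) i j = 0 := by rw [psi_apply, if_neg h]

lemma sigma_transpose {n : ℕ} : (sigmaMat R (2 * n))ᵀ = sigmaMat R (2 * n) := by
  ext i j
  rw [Matrix.transpose_apply, sigma_apply, sigma_apply]
  by_cases h : j = pairIdx i
  · rw [if_pos h, if_pos (pair_flip h)]
  · rw [if_neg h, if_neg (fun hc => h (pair_flip hc))]

lemma sigma_mul_sigma {n : ℕ} : sigmaMat R (2 * n) * sigmaMat R (2 * n) = 1 := by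
  ext i j
  rw [mul_pair _ _ sigma_zero, sigma_apply, sigma_apply, Matrix.one_apply, if_pos rfl, one_mul]
  by_cases h : i = j
  · rw [if_pos (by rw [pair_pair]; exact h.symm), if_pos h]
  · rw [if_neg (by rw [pair_pair]; exact fun hc => h hc.symm), if_neg h]

lemma psi_transpose {n : ℕ} : (psi R (2 * n))ᵀ = -psi R (2 * n) := by
  ext i j
  rw [Matrix.transpose_apply, Matrix.neg_apply, psi_apply, psi_apply]
  by_cases h : j = pairIdx i
  · rw [if_pos (pair_flip h), if_pos h]
    have hpar := pair_parity i
    rw [← h] at hpar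
    by_cases he : (i : ℕ) % 2 = 0
    · rw [if_pos he, if_neg (by tauto)]
      try simp
    · rw [if_neg he, if_pos (by tauto)]
      try simp
  · rw [if_neg h, if_neg (fun hc => h (pair_flip hc))]
    simp

lemma psi_mul_psit {n : ℕ} : psi R (2 * n) * (psi R (2 * n))ᵀ = 1 := by
  ext i j
  rw [mul_pair _ _ psi_zero, Matrix.transpose_apply, psi_apply, psi_apply, Matrix.one_apply,
    if_pos rfl]
  by_cases h : i = j
  · subst h
    by_cases he : (i : ℕ) % 2 = 0 <;> simp [he]
  · rw [if_neg (fun hc => h (pair_inj hc)), mul_zero, if_neg h]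

lemma mul_diag_left {n : ℕ} (M N : Matrix (Fin (2 * n)) (Fin (2 * n)) R)
    (hM : ∀ i k, k ≠ i → M i k = 0) (i j : Fin (2 * n)) :
    (M * N) i j = M i i * N i j := by
  rw [Matrix.mul_apply]
  exact Finset.sum_eq_single i (fun k _ hk => by rw [hM i k hk, zero_mul]) (by simp)

lemma sigma_psit_diag {n : ℕ} (i k : Fin (2 * n)) :
    (sigmaMat R (2 * n) * (psi R (2 * n))ᵀ) i k =
      if k = i then (if (i : ℕ) % 2 = 0 then 1 else -1) else 0 := by
  rw [mul_pair _ _ sigma_zero, sigma_apply, if_pos rfl, one_mul, Matrix.transpose_apply,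
    psi_apply]
  by_cases h : k = i
  · subst h
    simp
  · rw [if_neg (fun hc => h (pair_inj hc.symm)), if_neg h]

lemma sigma_psit_sigma {n : ℕ} :
    sigmaMat R (2 * n) * (psi R (2 * n))ᵀ * sigmaMat R (2 * n) = psi R (2 * n) := by
  ext i j
  rw [mul_diag_left _ _ (fun i k hk => by rw [sigma_psit_diag, if_neg hk]),
    sigma_psit_diag, if_pos rfl, sigma_apply, psi_apply]
  by_cases h : j = pairIdx i
  · rw [if_pos h, if_pos h, mul_one]
  · rw [if_neg h, if_neg h, mul_zero]

end Elem
namespace Elem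

variable {R : Type} [CommRing R]

lemma psi_split {a b : ℕ} (ha : a % 2 = 0) :
    oplus (psi R a) (psi R b) = psi R (a + b) := by
  ext i j
  have hi := i.isLt; have hj := j.isLt
  rw [oplus_apply]
  simp only [psi, Fin.val_mk]
  split_ifs <;> first | rfl | omega

lemma cong_oplus_left {a b : ℕ} {A A' : Matrix (Fin a) (Fin a) R}
    (B : Matrix (Fin b) (Fin b) R) (h : Cong A A') : Cong (oplus A B) (oplus A' B) :=
  Cong.reindex finSumFinEquiv (Cong.fromBlocks_left B h)

lemma cong_oplus_right {a b : ℕ} {B B' : Matrix (Fin b) (Fin b) R}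
    (A : Matrix (Fin a) (Fin a) R) (h : Cong B B') : Cong (oplus A B) (oplus A B') :=
  Cong.reindex finSumFinEquiv (Cong.fromBlocks_right A h)

lemma reindex_reindex {ι κ ρ : Type} (e : ι ≃ κ) (e' : κ ≃ ρ) (M : Matrix ι ι R) :
    Matrix.reindex e' e' (Matrix.reindex e e M) = Matrix.reindex (e.trans e') (e.trans e') M := by
  ext i j
  simp [Matrix.reindex_apply, Matrix.submatrix_apply]

lemma fromBlocks_reindex {ι κ ι' κ' : Type} (e₁ : ι ≃ ι') (e₂ : κ ≃ κ')
    (X : Matrix ι ι R) (Y : Matrix κ κ R) :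
    Matrix.fromBlocks (Matrix.reindex e₁ e₁ X) 0 0 (Matrix.reindex e₂ e₂ Y) =
      Matrix.reindex (Equiv.sumCongr e₁ e₂) (Equiv.sumCongr e₁ e₂)
        (Matrix.fromBlocks X 0 0 Y) := by
  ext (i|i) (j|j) <;>
    simp [Matrix.reindex_apply, Matrix.submatrix_apply, Matrix.fromBlocks]

lemma oplus_oplus {a b c d : ℕ} (A : Matrix (Fin a) (Fin a) R) (B : Matrix (Fin b) (Fin b) R)
    (C : Matrix (Fin c) (Fin c) R) (D : Matrix (Fin d) (Fin d) R) :
    oplus (oplus A B) (oplus C D) =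
      Matrix.reindex ((Equiv.sumCongr finSumFinEquiv finSumFinEquiv).trans finSumFinEquiv)
        ((Equiv.sumCongr finSumFinEquiv finSumFinEquiv).trans finSumFinEquiv)
        (Matrix.fromBlocks (Matrix.fromBlocks A 0 0 B) 0 0 (Matrix.fromBlocks C 0 0 D)) := by
  unfold oplus
  rw [fromBlocks_reindex, reindex_reindex]

lemma cong_oplus_swap02 {a b d : ℕ} (A C : Matrix (Fin a) (Fin a) R)
    (B : Matrix (Fin b) (Fin b) R) (D : Matrix (Fin d) (Fin d) R) :
    Cong (oplus (oplus A B) (oplus C D)) (oplus (oplus C B) (oplus A D)) := by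
  rw [oplus_oplus, oplus_oplus]
  exact Cong.reindex _ (Cong.swap02 A C B D)

lemma core_fin (n : ℕ) (h2 : IsUnit (2 : R)) (f : Matrix (Fin (2 * n)) (Fin (2 * n)) R)
    (hskew : fᵀ = -f) (hdet : IsUnit f.det) :
    Cong (oplus f (sigmaMat R (2 * n) * f⁻¹ * sigmaMat R (2 * n))) (psi R (2 * n + 2 * n)) := by
  obtain ⟨u, hu⟩ := h2
  have hc : 2 * ((u⁻¹ : Rˣ) : R) = 1 := by rw [← hu]; exact u.mul_inv
  have Hf := core_sum f f⁻¹ (sigmaMat R (2 * n)) _ hc sigma_transpose sigma_mul_sigma hskew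
    (Matrix.mul_nonsing_inv f hdet) (Matrix.nonsing_inv_mul f hdet)
  have Hψ := core_sum (psi R (2 * n)) (psi R (2 * n))ᵀ (sigmaMat R (2 * n)) _ hc
    sigma_transpose sigma_mul_sigma psi_transpose psi_mul_psit
    (mul_eq_one_comm.mp psi_mul_psit)
  rw [sigma_psit_sigma] at Hψ
  have hcong : Cong (oplus f (sigmaMat R (2 * n) * f⁻¹ * sigmaMat R (2 * n)))
      (oplus (psi R (2 * n)) (psi R (2 * n))) :=
    Cong.reindex finSumFinEquiv (Hf.symm.trans Hψ)
  rw [psi_split (by omega)] at hcong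
  exact hcong

end Elem

/-- cocycle relation in `W'_E(R)`. For invertible
skew-symmetric `f₀, f₁, f₂` of size `2n`,
`(f₁ ⊥ σf₀⁻¹σ) ⊥ (f₂ ⊥ σf₁⁻¹σ) ∼ f₂ ⊥ σf₀⁻¹σ`. -/
theorem witt_cocycle_relation
    (R : Type) [CommRing R] (h2 : IsUnit (2 : R)) (n : ℕ)
    (f₀ f₁ f₂ : Matrix (Fin (2 * n)) (Fin (2 * n)) R)
    (hf₀skew : f₀ᵀ = -f₀) (hf₁skew : f₁ᵀ = -f₁) (hf₂skew : f₂ᵀ = -f₂)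
    (hf₀ : IsUnit f₀.det) (hf₁ : IsUnit f₁.det) (hf₂ : IsUnit f₂.det) :
    WittEquiv
      (oplus (oplus f₁ (sigmaMat R (2 * n) * f₀⁻¹ * sigmaMat R (2 * n)))
             (oplus f₂ (sigmaMat R (2 * n) * f₁⁻¹ * sigmaMat R (2 * n))))
      (oplus f₂ (sigmaMat R (2 * n) * f₀⁻¹ * sigmaMat R (2 * n))) := by
  classical
  set g₀ := sigmaMat R (2 * n) * f₀⁻¹ * sigmaMat R (2 * n) with hg₀
  set g₁ := sigmaMat R (2 * n) * f₁⁻¹ * sigmaMat R (2 * n) with hg₁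
  set q := psi R (2 * n + 2 * n) with hq
  have s1 : Elem.Cong (oplus (oplus (oplus f₁ g₀) (oplus f₂ g₁)) q)
      (oplus (oplus (oplus f₂ g₀) (oplus f₁ g₁)) q) :=
    Elem.cong_oplus_left q (Elem.cong_oplus_swap02 f₁ f₂ g₀ g₁)
  have s2 : Elem.Cong (oplus f₁ g₁) q := Elem.core_fin n h2 f₁ hf₁skew hf₁
  have s3 : Elem.Cong (oplus (oplus (oplus f₂ g₀) (oplus f₁ g₁)) q)
      (oplus (oplus (oplus f₂ g₀) q) q) :=
    Elem.cong_oplus_left q (Elem.cong_oplus_right (oplus f₂ g₀) s2)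
  have chain := s1.trans s3
  have heq : matCast (by omega) (oplus (oplus f₂ g₀)
        (psi R (2 * n + 2 * n + (2 * n + 2 * n)))) = oplus (oplus (oplus f₂ g₀) q) q := by
    rw [← Elem.psi_split (a := 2 * n + 2 * n) (b := 2 * n + 2 * n) (by omega)]
    exact Elem.oplus_assoc _ _ _ _
  obtain ⟨E, hE, hEeq⟩ := chain
  have final : oplus (oplus (oplus f₁ g₀) (oplus f₂ g₁)) q =
      Eᵀ * matCast (by omega :
          2 * n + 2 * n + (2 * n + 2 * n + (2 * n + 2 * n)) =
            2 * n + 2 * n + (2 * n + 2 * n) + (2 * n + 2 * n))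
        (oplus (oplus f₂ g₀) (psi R (2 * n + 2 * n + (2 * n + 2 * n)))) * E := by
    rw [heq]
    exact hEeq
  exact ⟨0, E, hE, final⟩
end
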